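/- arXiv:2504.14599 — 3 statements merged into one kernel-verified Lean document; each statement's English description precedes it below -/
import Mathlib

section
/- One has t(3) + 2·t(2,1) = 2·t(2)·log(2), where t(3) = Σ_{m ≥ 1 odd} 1/m³, t(2) = Σ_{m ≥ 1 odd} 1/m² = π²/8, and t(2,1) = Σ_{m₁ > m₂ > 0, m₁, m₂ odd} 1/(m₁² m₂). -/
/-- Multiple t-value of level `N` with residue `a`:
`t_{N,a}(k) = Σ_{m₁ > ⋯ > mₙ > 0, mᵢ ≡ a (mod N)} 1/(m₁^{k₁} ⋯ mₙ^{kₙ})`. -/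
noncomputable def tv (N a : ℕ) (k : List ℕ) : ℝ :=
  ∑' m : {f : Fin k.length → ℕ // StrictAnti f ∧ ∀ i, 0 < f i ∧ f i % N = a % N},
    ∏ i : Fin k.length, ((m.1 i : ℝ) ^ k.get i)⁻¹

open Filter Topology Finset

namespace MTV


/-- partial sums of odd reciprocals: `O n = 1 + 1/3 + ... + 1/(2n+1)` -/
noncomputable def O (n : ℕ) : ℝ := ∑ k ∈ Finset.range (n+1), (2*(k:ℝ)+1)⁻¹

lemma tendsto_inv_aux (a b : ℝ) (ha : 0 < a) :
    Tendsto (fun N : ℕ => (a*(N:ℝ)+b)⁻¹) atTop (𝓝 0) := by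
  apply Tendsto.inv_tendsto_atTop
  apply tendsto_atTop_add_const_right
  exact Tendsto.const_mul_atTop ha tendsto_natCast_atTop_atTop

/-- Telescoping series with step 2 and shift `h`. -/
lemma tele (c : ℝ) (hc : 1 ≤ c) (h : ℕ) :
    HasSum (fun j : ℕ => (c+2*(j:ℝ))⁻¹ - (c+2*(j:ℝ)+2*(h:ℝ))⁻¹)
      (∑ j ∈ range h, (c+2*(j:ℝ))⁻¹) := by
  set f : ℕ → ℝ := fun j => (c+2*(j:ℝ))⁻¹ with hf
  have hpos : ∀ j : ℕ, (0:ℝ) < c + 2*(j:ℝ) := by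
    intro j; have : (0:ℝ) ≤ (j:ℝ) := Nat.cast_nonneg j; linarith
  have hfun : (fun j : ℕ => (c+2*(j:ℝ))⁻¹ - (c+2*(j:ℝ)+2*(h:ℝ))⁻¹)
      = fun j => f j - f (j+h) := by
    funext j; simp only [f]; push_cast; ring_nf
  have hnn : ∀ j : ℕ, 0 ≤ f j - f (j+h) := by
    intro j
    have h1 := hpos j
    have h2 : c + 2*(j:ℝ) ≤ c + 2*((j+h : ℕ):ℝ) := by push_cast; have : (0:ℝ) ≤ (h:ℝ) := Nat.cast_nonneg h; linarith
    have := inv_anti₀ h1 h2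
    simp only [f]; linarith
  rw [hfun, hasSum_iff_tendsto_nat_of_nonneg hnn]
  have key : ∀ N, ∑ j ∈ range N, (f j - f (j+h)) = ∑ j ∈ range h, f j - ∑ j ∈ range h, f (N+j) := by
    intro N
    have e1 : ∑ j ∈ range N, f (j+h) = ∑ j ∈ range (N+h), f j - ∑ j ∈ range h, f j := by
      rw [← Finset.sum_Ico_eq_sub f (Nat.le_add_left h N), Finset.sum_Ico_eq_sum_range]
      simp only [Nat.add_sub_cancel]
      exact Finset.sum_congr rfl fun j _ => by rw [add_comm]
    have e2 : ∑ j ∈ range h, f (N+j) = ∑ j ∈ range (N+h), f j - ∑ j ∈ range N, f j := by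
      rw [← Finset.sum_Ico_eq_sub f (Nat.le_add_right N h), Finset.sum_Ico_eq_sum_range]
      simp only [Nat.add_sub_cancel_left]
    rw [Finset.sum_sub_distrib, e1]
    rw [e2]
    ring
  have htail : Tendsto (fun N : ℕ => ∑ j ∈ range h, f (N+j)) atTop (𝓝 0) := by
    have : Tendsto (fun N : ℕ => ∑ j ∈ range h, f (N+j)) atTop (𝓝 (∑ j ∈ range h, (0:ℝ))) := by
      apply tendsto_finset_sum
      intro j _
      have := tendsto_inv_aux 2 (c + 2*(j:ℝ)) two_pos
      simp only [f]
      convert this using 2 with N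
      push_cast; ring
    simpa using this
  have := (tendsto_const_nhds (x := ∑ j ∈ range h, f j) (f := atTop (α := ℕ))).sub htail
  simp only [sub_zero] at this
  exact Tendsto.congr (fun N => (key N).symm) this



lemma hasSum_log2 :
    HasSum (fun j : ℕ => (2*(j:ℝ)+1)⁻¹ - (2*(j:ℝ)+2)⁻¹) (Real.log 2) := by
  have hnn : ∀ j : ℕ, 0 ≤ (2*(j:ℝ)+1)⁻¹ - (2*(j:ℝ)+2)⁻¹ := by
    intro j
    have h0 : (0:ℝ) ≤ (j:ℝ) := Nat.cast_nonneg j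
    have h1 : (0:ℝ) < 2*(j:ℝ)+1 := by linarith
    have := inv_anti₀ h1 (by linarith : 2*(j:ℝ)+1 ≤ 2*(j:ℝ)+2)
    linarith
  rw [hasSum_iff_tendsto_nat_of_nonneg hnn]
  have key : ∀ N, ∑ j ∈ range N, ((2*(j:ℝ)+1)⁻¹ - (2*(j:ℝ)+2)⁻¹)
      = (harmonic (2*N) : ℝ) - (harmonic N : ℝ) := by
    intro N
    induction N with
    | zero => simp
    | succ n ih =>
      rw [Finset.sum_range_succ, ih]
      have h2 : 2*(n+1) = (2*n+1)+1 := by ring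
      rw [h2, harmonic_succ, harmonic_succ, harmonic_succ]
      push_cast
      have hne1 : (2*(n:ℝ)+1) ≠ 0 := by positivity
      have hne2 : (2*(n:ℝ)+2) ≠ 0 := by positivity
      have hne3 : ((n:ℝ)+1) ≠ 0 := by positivity
      field_simp
      ring
  have h2N : Tendsto (fun N : ℕ => (harmonic (2*N) : ℝ) - Real.log ((2*N : ℕ):ℝ)) atTop
      (𝓝 Real.eulerMascheroniConstant) :=
    Real.tendsto_harmonic_sub_log.comp
      (tendsto_atTop_mono (fun n => by omega : ∀ n : ℕ, n ≤ 2*n) tendsto_id)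
  have hN := Real.tendsto_harmonic_sub_log
  have hmain : Tendsto (fun N : ℕ =>
      ((harmonic (2*N) : ℝ) - Real.log ((2*N : ℕ):ℝ)) - ((harmonic N : ℝ) - Real.log N) + Real.log 2)
      atTop (𝓝 (Real.eulerMascheroniConstant - Real.eulerMascheroniConstant + Real.log 2)) :=
    Tendsto.add_const _ (h2N.sub hN)
  rw [sub_self, zero_add] at hmain
  apply Tendsto.congr' _ hmain
  filter_upwards [eventually_ge_atTop 1] with N hn
  have hN0 : (N:ℝ) ≠ 0 := Nat.cast_ne_zero.mpr (by omega)
  have hlog : Real.log ((2*N : ℕ):ℝ) = Real.log 2 + Real.log N := by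
    push_cast
    rw [Real.log_mul two_ne_zero hN0]
  rw [key N, hlog]
  ring

noncomputable def Ep (n : ℕ) : ℝ := ∑ j ∈ Finset.range n, (2*(j:ℝ)+2)⁻¹


noncomputable def fW : ℕ × ℕ → ℝ := fun p =>
  (2*(p.1:ℝ)+1)⁻¹ * (2*(p.2:ℝ)+2)⁻¹ * (2*(p.1:ℝ)+2*(p.2:ℝ)+3)⁻¹
noncomputable def fZ : ℕ × ℕ → ℝ := fun p =>
  (2*(p.1:ℝ)+1)⁻¹ * (2*(p.2:ℝ)+1)⁻¹ * (2*(p.1:ℝ)+2*(p.2:ℝ)+2)⁻¹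

lemma hs_one : HasSum (fun j : ℕ => (2*(j:ℝ)+1)⁻¹ - (2*(j:ℝ)+3)⁻¹) 1 := by
  have := tele 1 le_rfl 1
  simp only [Nat.cast_one, Finset.sum_range_one] at this
  norm_num at this
  convert this using 2 with j
  ring_nf

lemma hs_u : HasSum (fun j : ℕ => (2*(j:ℝ)+2)⁻¹ - (2*(j:ℝ)+3)⁻¹) (1 - Real.log 2) := by
  have := hs_one.sub hasSum_log2
  convert this using 2 with j
  · rfl
  ring

lemma Osucc (i : ℕ) : ∑ j ∈ range i, (3+2*(j:ℝ))⁻¹ = O i - 1 := by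
  unfold O
  rw [Finset.sum_range_succ']
  push_cast
  norm_num
  exact Finset.sum_congr rfl fun j _ => by ring_nf

lemma hsW_inner (i : ℕ) :
    HasSum (fun j => fW (i,j)) ((2*(i:ℝ)+1)⁻¹*(2*(i:ℝ)+1)⁻¹*(O i - Real.log 2)) := by
  have h1 := hs_u.add (tele 3 (by norm_num) i)
  rw [Osucc] at h1
  have h2 : (1 - Real.log 2 + (O i - 1)) = O i - Real.log 2 := by ring
  rw [h2] at h1
  have h3 := h1.mul_left ((2*(i:ℝ)+1)⁻¹*(2*(i:ℝ)+1)⁻¹)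
  convert h3 using 2 with j
  · rfl
  unfold fW
  simp only
  have d1 : (2*(j:ℝ)+2) ≠ 0 := by positivity
  have d2 : (2*(j:ℝ)+3) ≠ 0 := by positivity
  have d3 : (2*(i:ℝ)+1) ≠ 0 := by positivity
  have d4 : (3+2*(j:ℝ)+2*(i:ℝ)) ≠ 0 := by positivity
  have d5 : (2*(i:ℝ)+2*(j:ℝ)+3) ≠ 0 := by positivity
  field_simp
  ring

lemma hsZ_inner (i : ℕ) :
    HasSum (fun j => fZ (i,j)) ((2*(i:ℝ)+1)⁻¹*(2*(i:ℝ)+1)⁻¹*(Real.log 2 + Ep i)) := by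
  have h1 := hasSum_log2.add (tele 2 (by norm_num) i)
  have h2 : ∑ j ∈ range i, (2+2*(j:ℝ))⁻¹ = Ep i := by
    unfold Ep; exact Finset.sum_congr rfl fun j _ => by ring_nf
  rw [h2] at h1
  have h3 := h1.mul_left ((2*(i:ℝ)+1)⁻¹*(2*(i:ℝ)+1)⁻¹)
  convert h3 using 2 with j
  · rfl
  unfold fZ
  simp only
  have d1 : (2*(j:ℝ)+1) ≠ 0 := by positivity
  have d2 : (2*(j:ℝ)+2) ≠ 0 := by positivity
  have d3 : (2*(i:ℝ)+1) ≠ 0 := by positivity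
  have d4 : (2+2*(j:ℝ)+2*(i:ℝ)) ≠ 0 := by positivity
  have d5 : (2*(i:ℝ)+2*(j:ℝ)+2) ≠ 0 := by positivity
  field_simp
  ring

lemma hsW_inner' (j : ℕ) :
    HasSum (fun i => fW (i,j)) ((2*(j:ℝ)+2)⁻¹*(2*(j:ℝ)+2)⁻¹*(O j)) := by
  have h1 := tele 1 le_rfl (j+1)
  have h2 : ∑ k ∈ range (j+1), (1+2*(k:ℝ))⁻¹ = O j := by
    unfold O; exact Finset.sum_congr rfl fun k _ => by ring_nf
  rw [h2] at h1
  have h3 := h1.mul_left ((2*(j:ℝ)+2)⁻¹*(2*(j:ℝ)+2)⁻¹)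
  convert h3 using 2 with i
  · rfl
  unfold fW
  simp only
  push_cast
  have d1 : (2*(i:ℝ)+1) ≠ 0 := by positivity
  have d2 : (2*(j:ℝ)+2) ≠ 0 := by positivity
  have d3 : (1+2*(i:ℝ)) ≠ 0 := by positivity
  have d4 : (1+2*(i:ℝ)+2*((j:ℝ)+1)) ≠ 0 := by positivity
  have d5 : (2*(i:ℝ)+2*(j:ℝ)+3) ≠ 0 := by positivity
  field_simp
  ring


lemma Hsqrt (n : ℕ) : ∑ k ∈ range n, ((k:ℝ)+1)⁻¹ ≤ 2*Real.sqrt n := by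
  induction n with
  | zero => simp
  | succ n ih =>
    rw [Finset.sum_range_succ]
    set s := Real.sqrt n with hs
    set t := Real.sqrt (n+1) with ht
    have hs0 : 0 ≤ s := Real.sqrt_nonneg _
    have ht0 : 0 ≤ t := Real.sqrt_nonneg _
    have hs2 : s^2 = n := Real.sq_sqrt (by positivity)
    have ht2 : t^2 = (n:ℝ)+1 := by
      rw [ht, show ((n:ℕ):ℝ)+1 = (((n+1:ℕ)):ℝ) by push_cast; ring]
      exact Real.sq_sqrt (by positivity)
    have hst : s ≤ t := Real.sqrt_le_sqrt (by push_cast; linarith)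
    have ht1 : 1 ≤ t := by nlinarith
    have key : ((n:ℝ)+1)⁻¹ ≤ 2*(t-s) := by
      rw [inv_eq_one_div, div_le_iff₀ (by positivity)]
      nlinarith
    have hcast : (((n+1:ℕ)):ℝ) = (n:ℝ)+1 := by push_cast; ring
    rw [hcast] at *
    linarith

lemma Obound (n : ℕ) : O n ≤ 1 + Real.sqrt n := by
  unfold O
  rw [Finset.sum_range_succ']
  have e0 : (2*((0:ℕ):ℝ)+1)⁻¹ = 1 := by norm_num
  have hterm : ∀ k ∈ range n, (2*(((k+1:ℕ)):ℝ)+1)⁻¹ ≤ (1/2)*((k:ℝ)+1)⁻¹ := by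
    intro k _
    push_cast
    have e : (1/2:ℝ)*((k:ℝ)+1)⁻¹ = (2*((k:ℝ)+1))⁻¹ := by rw [mul_inv]; ring
    rw [e]
    exact inv_anti₀ (by positivity) (by linarith)
  have h1 := Finset.sum_le_sum hterm
  have h2 : ∑ k ∈ range n, ((1:ℝ)/2) * ((k:ℝ)+1)⁻¹ ≤ Real.sqrt n := by
    rw [← Finset.mul_sum]
    have := Hsqrt n
    linarith
  rw [e0]
  linarith

lemma Epbound (n : ℕ) : Ep n ≤ Real.sqrt n := by
  unfold Ep
  have e : ∀ j ∈ range n, (2*(j:ℝ)+2)⁻¹ = (1/2)*((j:ℝ)+1)⁻¹ := by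
    intro j _
    rw [show (2*(j:ℝ)+2) = 2*((j:ℝ)+1) by ring, mul_inv]
    ring
  rw [Finset.sum_congr rfl e, ← Finset.mul_sum]
  have := Hsqrt n
  linarith

lemma Msum : Summable (fun n : ℕ => ((n:ℝ)+1)⁻¹ * ((n:ℝ)+1)⁻¹ * (1+Real.sqrt n)) := by
  have base : Summable (fun n : ℕ => 1/(n:ℝ)^((3:ℝ)/2)) :=
    Real.summable_one_div_nat_rpow.mpr (by norm_num)
  have shifted : Summable (fun n : ℕ => 1/((n:ℝ)+1)^((3:ℝ)/2)) := by
    have := (summable_nat_add_iff 1).mpr base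
    apply this.congr
    intro n
    push_cast
    ring_nf
  apply Summable.of_nonneg_of_le _ _ (shifted.mul_left 2)
  · intro n; positivity
  · intro n
    set u : ℝ := (n:ℝ)+1 with hu
    have hu0 : (0:ℝ) < u := by positivity
    set t := Real.sqrt u with htdef
    have ht0 : 0 < t := Real.sqrt_pos.mpr hu0
    have ht2 : t^2 = u := Real.sq_sqrt hu0.le
    have ht1 : 1 ≤ t := by nlinarith
    have hsn : Real.sqrt n ≤ t := Real.sqrt_le_sqrt (by rw [hu]; linarith)
    have hsn0 : 0 ≤ Real.sqrt (n:ℝ) := Real.sqrt_nonneg _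
    have hrpow : u^((3:ℝ)/2) = u * t := by
      rw [show (3:ℝ)/2 = 1+1/2 by norm_num, Real.rpow_add hu0, Real.rpow_one,
        ← Real.sqrt_eq_rpow]
    rw [hrpow]
    have lhs_eq : u⁻¹ * u⁻¹ * (1+Real.sqrt (n:ℝ)) = (1+Real.sqrt (n:ℝ))/(u*u) := by
      rw [div_eq_mul_inv, mul_inv]; ring
    have k1 : (1+Real.sqrt (n:ℝ))*t ≤ 2*u := by nlinarith
    have goal2 : (1+Real.sqrt (n:ℝ))*(u*t) ≤ 2*(u*u) := by nlinarith
    rw [lhs_eq, show (2:ℝ)*(1/(u*t)) = 2/(u*t) by ring,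
      div_le_div_iff₀ (by positivity) (by positivity)]
    nlinarith

lemma S2 : Summable (fun j : ℕ => ((j:ℝ)+1)⁻¹ * ((j:ℝ)+1)⁻¹) := by
  apply Summable.of_nonneg_of_le _ _ Msum
  · intro n; positivity
  · intro n
    have h1 : (0:ℝ) ≤ Real.sqrt n := Real.sqrt_nonneg _
    nlinarith [inv_nonneg.mpr (by positivity : (0:ℝ) ≤ (n:ℝ)+1)]


lemma O_ge_one (n : ℕ) : 1 ≤ O n := by
  unfold O
  have h0 : ((0:ℕ) ∈ range (n+1)) := by simp
  have := Finset.single_le_sum (f := fun k : ℕ => (2*(k:ℝ)+1)⁻¹)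
    (fun k _ => by positivity) h0
  norm_num at this
  exact this

lemma log2_le_one : Real.log 2 ≤ 1 := by
  have := Real.log_le_sub_one_of_pos (by norm_num : (0:ℝ) < 2)
  linarith

lemma log2_nonneg : 0 ≤ Real.log 2 := Real.log_nonneg (by norm_num)

lemma Ep_nonneg (n : ℕ) : 0 ≤ Ep n := by
  unfold Ep; apply Finset.sum_nonneg; intro j _; positivity

lemma O_nonneg (n : ℕ) : 0 ≤ O n := le_trans zero_le_one (O_ge_one n)

lemma inv_odd_le (i : ℕ) : (2*(i:ℝ)+1)⁻¹ ≤ ((i:ℝ)+1)⁻¹ :=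
  inv_anti₀ (by positivity) (by linarith [Nat.cast_nonneg (α := ℝ) i])

lemma inv_odd_nonneg (i : ℕ) : (0:ℝ) ≤ (2*(i:ℝ)+1)⁻¹ := by positivity

/-- summability of the closed form for the `W` row sums -/
lemma sumWA : Summable (fun i : ℕ => (2*(i:ℝ)+1)⁻¹*(2*(i:ℝ)+1)⁻¹*(O i - Real.log 2)) := by
  apply Summable.of_nonneg_of_le _ _ Msum
  · intro i
    have := O_ge_one i
    have := log2_le_one
    have : 0 ≤ O i - Real.log 2 := by linarith
    positivity
  · intro i
    have h1 : O i - Real.log 2 ≤ 1 + Real.sqrt i := by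
      have := Obound i; have := log2_nonneg; linarith
    have h3 : 0 ≤ O i - Real.log 2 := by
      have := O_ge_one i; have := log2_le_one; linarith
    exact mul_le_mul (mul_le_mul (inv_odd_le i) (inv_odd_le i) (inv_odd_nonneg i)
      (by positivity)) h1 h3 (by positivity)

lemma sumZA : Summable (fun i : ℕ => (2*(i:ℝ)+1)⁻¹*(2*(i:ℝ)+1)⁻¹*(Real.log 2 + Ep i)) := by
  apply Summable.of_nonneg_of_le _ _ Msum
  · intro i
    have := Ep_nonneg i; have := log2_nonneg
    positivity
  · intro i
    have h1 : Real.log 2 + Ep i ≤ 1 + Real.sqrt i := by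
      have := Epbound i; have := log2_le_one; linarith
    have h3 : 0 ≤ Real.log 2 + Ep i := by
      have := Ep_nonneg i; have := log2_nonneg; linarith
    exact mul_le_mul (mul_le_mul (inv_odd_le i) (inv_odd_le i) (inv_odd_nonneg i)
      (by positivity)) h1 h3 (by positivity)

lemma summable_fW : Summable fW := by
  have hnn : 0 ≤ fW := by
    intro p; unfold fW; positivity
  rw [summable_prod_of_nonneg hnn]
  constructor
  · intro i; exact (hsW_inner i).summable
  · apply sumWA.congr
    intro i
    exact ((hsW_inner i).tsum_eq).symm

lemma summable_fZ : Summable fZ := by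
  have hnn : 0 ≤ fZ := by
    intro p; unfold fZ; positivity
  rw [summable_prod_of_nonneg hnn]
  constructor
  · intro i; exact (hsZ_inner i).summable
  · apply sumZA.congr
    intro i
    exact ((hsZ_inner i).tsum_eq).symm

/-- the diagonal re-grouping equivalence -/
def sig : (Σ _n : ℕ, Fin (_n+1)) ≃ ℕ × ℕ where
  toFun x := (x.2.1, x.1 - x.2.1)
  invFun p := ⟨p.1 + p.2, ⟨p.1, by omega⟩⟩
  left_inv := by
    rintro ⟨n, ⟨k, hk⟩⟩
    have hk' : k ≤ n := by omega
    have h : k + (n - k) = n := by omega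
    apply Sigma.ext
    · simpa using h
    · simp only
      rw [Fin.heq_ext_iff (by rw [h])]
  right_inv := by
    rintro ⟨i, j⟩
    simp

lemma diag (g : ℕ×ℕ → ℝ) (hg : Summable g) :
    ∑' p, g p = ∑' n, ∑ k ∈ range (n+1), g (k, n-k) := by
  have hs : Summable (fun c : Σ _n : ℕ, Fin (_n+1) => g (sig c)) := sig.summable_iff.mpr hg
  rw [← sig.tsum_eq g, hs.tsum_sigma]
  congr 1
  funext n
  rw [tsum_fintype]
  exact Fin.sum_univ_eq_sum_range (fun k => g (k, n-k)) (n+1)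



noncomputable def T3 : ℝ := ∑' i : ℕ, (2*(i:ℝ)+1)⁻¹*(2*(i:ℝ)+1)⁻¹*(2*(i:ℝ)+1)⁻¹
noncomputable def T2 : ℝ := ∑' i : ℕ, (2*(i:ℝ)+1)⁻¹*(2*(i:ℝ)+1)⁻¹
noncomputable def T21 : ℝ := ∑' n : ℕ, (2*(n:ℝ)+3)⁻¹*(2*(n:ℝ)+3)⁻¹*(O n)
noncomputable def QQ : ℝ := ∑' n : ℕ, (2*(n:ℝ)+3)⁻¹*(2*(n:ℝ)+3)⁻¹*(Ep (n+1))

lemma WC_inner (n : ℕ) : ∑ k ∈ range (n+1), fW (k, n-k)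
    = (2*(n:ℝ)+3)⁻¹*(2*(n:ℝ)+3)⁻¹*(O n + Ep (n+1)) := by
  have hterm : ∀ k ∈ range (n+1), fW (k, n-k)
      = (2*(n:ℝ)+3)⁻¹*(2*(n:ℝ)+3)⁻¹*((2*(k:ℝ)+1)⁻¹ + (2*(((n-k:ℕ)):ℝ)+2)⁻¹) := by
    intro k hk
    have hk' : k ≤ n := by have := Finset.mem_range.mp hk; omega
    unfold fW
    simp only
    rw [Nat.cast_sub hk']
    have hkn : (k:ℝ) ≤ (n:ℝ) := Nat.cast_le.mpr hk'
    have d1 : (2*(k:ℝ)+1) ≠ 0 := by positivity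
    have d2 : (2*((n:ℝ)-(k:ℝ))+2) ≠ 0 := by intro h; nlinarith
    have d3 : (2*(n:ℝ)+3) ≠ 0 := by positivity
    have e : 2*(k:ℝ)+2*((n:ℝ)-(k:ℝ))+3 = 2*(n:ℝ)+3 := by ring
    rw [e]
    field_simp
    have d6 : (1+(n:ℝ)-(k:ℝ)) ≠ 0 := by intro h; nlinarith
    have hx : (1+(n:ℝ)-(k:ℝ))⁻¹ * (1+(n:ℝ)-(k:ℝ)) = 1 := inv_mul_cancel₀ d6
    linear_combination 2*hx
  have hB : ∑ x ∈ range (n+1), (2*(((n-x:ℕ)):ℝ)+2)⁻¹ = Ep (n+1) := by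
    have hrefl := Finset.sum_range_reflect (fun j => (2*(j:ℝ)+2)⁻¹) (n+1)
    simp only [Nat.add_sub_cancel] at hrefl
    unfold Ep
    exact hrefl
  have hA : ∑ k ∈ range (n+1), (2*(k:ℝ)+1)⁻¹ = O n := rfl
  rw [Finset.sum_congr rfl hterm, ← Finset.mul_sum, Finset.sum_add_distrib, hB, hA]
  
lemma ZC_inner (n : ℕ) : ∑ k ∈ range (n+1), fZ (k, n-k)
    = (2*(n:ℝ)+2)⁻¹*(2*(n:ℝ)+2)⁻¹*(2*(O n)) := by
  have hterm : ∀ k ∈ range (n+1), fZ (k, n-k)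
      = (2*(n:ℝ)+2)⁻¹*(2*(n:ℝ)+2)⁻¹*((2*(k:ℝ)+1)⁻¹ + (2*(((n-k:ℕ)):ℝ)+1)⁻¹) := by
    intro k hk
    have hk' : k ≤ n := by have := Finset.mem_range.mp hk; omega
    unfold fZ
    simp only
    rw [Nat.cast_sub hk']
    have hkn : (k:ℝ) ≤ (n:ℝ) := Nat.cast_le.mpr hk'
    have d1 : (2*(k:ℝ)+1) ≠ 0 := by positivity
    have d2 : (2*((n:ℝ)-(k:ℝ))+1) ≠ 0 := by intro h; nlinarith
    have d3 : (2*(n:ℝ)+2) ≠ 0 := by positivity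
    have e : 2*(k:ℝ)+2*((n:ℝ)-(k:ℝ))+2 = 2*(n:ℝ)+2 := by ring
    rw [e]
    field_simp
    ring
  have hrefl := Finset.sum_range_reflect (fun j => (2*(j:ℝ)+1)⁻¹) (n+1)
  simp only [Nat.add_sub_cancel] at hrefl
  have hB2 : ∑ k ∈ range (n+1), (2*(((n-k:ℕ)):ℝ)+1)⁻¹ = O n := by
    unfold O
    exact hrefl
  have hA : ∑ k ∈ range (n+1), (2*(k:ℝ)+1)⁻¹ = O n := rfl
  rw [Finset.sum_congr rfl hterm, ← Finset.mul_sum, Finset.sum_add_distrib, hB2, hA]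
  ring

lemma sum_T2' : Summable (fun i : ℕ => (2*(i:ℝ)+1)⁻¹*(2*(i:ℝ)+1)⁻¹) := by
  apply Summable.of_nonneg_of_le _ _ S2
  · intro i; positivity
  · intro i
    exact mul_le_mul (inv_odd_le i) (inv_odd_le i) (inv_odd_nonneg i) (by positivity)

lemma sum_Oterm : Summable (fun i : ℕ => (2*(i:ℝ)+1)⁻¹*(2*(i:ℝ)+1)⁻¹*(O i)) := by
  have h := sumWA.add (sum_T2'.mul_right (Real.log 2))
  apply h.congr
  intro i
  ring

lemma sum_Epterm : Summable (fun i : ℕ => (2*(i:ℝ)+1)⁻¹*(2*(i:ℝ)+1)⁻¹*(Ep i)) := by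
  have h := sumZA.sub (sum_T2'.mul_right (Real.log 2))
  apply h.congr
  intro i
  ring

lemma sum_OL : Summable (fun i : ℕ => (2*(i:ℝ)+1)⁻¹*(2*(i:ℝ)+1)⁻¹*(∑ k ∈ range i, (2*(k:ℝ)+1)⁻¹)) := by
  apply Summable.of_nonneg_of_le _ _ sum_Oterm
  · intro i
    have : (0:ℝ) ≤ ∑ k ∈ range i, (2*(k:ℝ)+1)⁻¹ := Finset.sum_nonneg fun k _ => by positivity
    positivity
  · intro i
    have h1 : ∑ k ∈ range i, (2*(k:ℝ)+1)⁻¹ ≤ O i := by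
      unfold O
      rw [Finset.sum_range_succ]
      have : (0:ℝ) ≤ (2*(i:ℝ)+1)⁻¹ := by positivity
      linarith
    have : (0:ℝ) ≤ (2*(i:ℝ)+1)⁻¹*(2*(i:ℝ)+1)⁻¹ := by positivity
    exact mul_le_mul_of_nonneg_left h1 this

lemma sum_T3' : Summable (fun i : ℕ => (2*(i:ℝ)+1)⁻¹*(2*(i:ℝ)+1)⁻¹*(2*(i:ℝ)+1)⁻¹) := by
  apply Summable.of_nonneg_of_le _ _ sum_T2'
  · intro i; positivity
  · intro i
    have h1 : (2*(i:ℝ)+1)⁻¹ ≤ 1 := by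
      apply inv_le_one_of_one_le₀
      linarith [Nat.cast_nonneg (α := ℝ) i]
    calc (2*(i:ℝ)+1)⁻¹*(2*(i:ℝ)+1)⁻¹*(2*(i:ℝ)+1)⁻¹
        ≤ (2*(i:ℝ)+1)⁻¹*(2*(i:ℝ)+1)⁻¹*1 :=
          mul_le_mul_of_nonneg_left h1 (by positivity)
      _ = (2*(i:ℝ)+1)⁻¹*(2*(i:ℝ)+1)⁻¹ := by ring

lemma idA : ∑' i : ℕ, (2*(i:ℝ)+1)⁻¹*(2*(i:ℝ)+1)⁻¹*(O i) = T3 + T21 := by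
  have split : ∀ i : ℕ, (2*(i:ℝ)+1)⁻¹*(2*(i:ℝ)+1)⁻¹*(O i)
      = (2*(i:ℝ)+1)⁻¹*(2*(i:ℝ)+1)⁻¹*(∑ k ∈ range i, (2*(k:ℝ)+1)⁻¹)
        + (2*(i:ℝ)+1)⁻¹*(2*(i:ℝ)+1)⁻¹*(2*(i:ℝ)+1)⁻¹ := by
    intro i
    unfold O
    rw [Finset.sum_range_succ]
    ring
  rw [tsum_congr split, sum_OL.tsum_add sum_T3']
  have hshift : ∑' i : ℕ, (2*(i:ℝ)+1)⁻¹*(2*(i:ℝ)+1)⁻¹*(∑ k ∈ range i, (2*(k:ℝ)+1)⁻¹) = T21 := by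
    rw [sum_OL.tsum_eq_zero_add]
    simp only [Finset.range_zero, Finset.sum_empty, mul_zero, zero_add]
    unfold T21
    apply tsum_congr
    intro n
    have hc : (2*(((n+1:ℕ)):ℝ)+1) = 2*(n:ℝ)+3 := by push_cast; ring
    rw [hc]
    rfl
  rw [hshift]
  unfold T3
  ring

lemma idQ : ∑' i : ℕ, (2*(i:ℝ)+1)⁻¹*(2*(i:ℝ)+1)⁻¹*(Ep i) = QQ := by
  rw [sum_Epterm.tsum_eq_zero_add]
  have h0 : Ep 0 = 0 := by unfold Ep; simp
  rw [h0]
  simp only [mul_zero, zero_add]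
  unfold QQ
  apply tsum_congr
  intro n
  have hc : (2*(((n+1:ℕ)):ℝ)+1) = 2*(n:ℝ)+3 := by push_cast; ring
  rw [hc]

lemma eqWA : ∑' p, fW p = (T3 + T21) - Real.log 2 * T2 := by
  rw [summable_fW.tsum_prod]
  have h1 : ∑' i : ℕ, ∑' j : ℕ, fW (i,j)
      = ∑' i : ℕ, (2*(i:ℝ)+1)⁻¹*(2*(i:ℝ)+1)⁻¹*(O i - Real.log 2) :=
    tsum_congr fun i => (hsW_inner i).tsum_eq
  rw [h1]
  have split : ∀ i : ℕ, (2*(i:ℝ)+1)⁻¹*(2*(i:ℝ)+1)⁻¹*(O i - Real.log 2)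
      = (2*(i:ℝ)+1)⁻¹*(2*(i:ℝ)+1)⁻¹*(O i) - ((2*(i:ℝ)+1)⁻¹*(2*(i:ℝ)+1)⁻¹)*Real.log 2 := by
    intro i; ring
  rw [tsum_congr split, Summable.tsum_sub sum_Oterm (sum_T2'.mul_right (Real.log 2)),
    tsum_mul_right, idA]
  unfold T2
  ring

lemma eqWB : ∑' p, fW p = ∑' j : ℕ, (2*(j:ℝ)+2)⁻¹*(2*(j:ℝ)+2)⁻¹*(O j) := by
  rw [summable_fW.tsum_prod]
  have h := Summable.tsum_comm (f := fun i j : ℕ => fW (i,j)) summable_fW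
  rw [← h]
  exact tsum_congr fun j => (hsW_inner' j).tsum_eq

lemma eqZA : ∑' p, fZ p = Real.log 2 * T2 + QQ := by
  rw [summable_fZ.tsum_prod]
  have h1 : ∑' i : ℕ, ∑' j : ℕ, fZ (i,j)
      = ∑' i : ℕ, (2*(i:ℝ)+1)⁻¹*(2*(i:ℝ)+1)⁻¹*(Real.log 2 + Ep i) :=
    tsum_congr fun i => (hsZ_inner i).tsum_eq
  rw [h1]
  have split : ∀ i : ℕ, (2*(i:ℝ)+1)⁻¹*(2*(i:ℝ)+1)⁻¹*(Real.log 2 + Ep i)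
      = ((2*(i:ℝ)+1)⁻¹*(2*(i:ℝ)+1)⁻¹)*Real.log 2 + (2*(i:ℝ)+1)⁻¹*(2*(i:ℝ)+1)⁻¹*(Ep i) := by
    intro i; ring
  rw [tsum_congr split, Summable.tsum_add (sum_T2'.mul_right (Real.log 2)) sum_Epterm,
    tsum_mul_right, idQ]
  unfold T2
  ring

lemma eqWC : ∑' p, fW p = T21 + QQ := by
  rw [diag fW summable_fW, tsum_congr WC_inner]
  have split : ∀ n : ℕ, (2*(n:ℝ)+3)⁻¹*(2*(n:ℝ)+3)⁻¹*(O n + Ep (n+1))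
      = (2*(n:ℝ)+3)⁻¹*(2*(n:ℝ)+3)⁻¹*(O n) + (2*(n:ℝ)+3)⁻¹*(2*(n:ℝ)+3)⁻¹*(Ep (n+1)) := by
    intro n; ring
  have s1 : Summable (fun n : ℕ => (2*(n:ℝ)+3)⁻¹*(2*(n:ℝ)+3)⁻¹*(O n)) := by
    have := sum_OL
    rw [← summable_nat_add_iff 1] at this
    apply this.congr
    intro n
    have hc : (2*(((n+1:ℕ)):ℝ)+1) = 2*(n:ℝ)+3 := by push_cast; ring
    rw [hc]
    rfl
  have s2 : Summable (fun n : ℕ => (2*(n:ℝ)+3)⁻¹*(2*(n:ℝ)+3)⁻¹*(Ep (n+1))) := by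
    have := sum_Epterm
    rw [← summable_nat_add_iff 1] at this
    apply this.congr
    intro n
    have hc : (2*(((n+1:ℕ)):ℝ)+1) = 2*(n:ℝ)+3 := by push_cast; ring
    rw [hc]
  rw [tsum_congr split, Summable.tsum_add s1 s2]
  rfl

lemma eqZC : ∑' p, fZ p = 2 * (∑' j : ℕ, (2*(j:ℝ)+2)⁻¹*(2*(j:ℝ)+2)⁻¹*(O j)) := by
  rw [diag fZ summable_fZ, tsum_congr ZC_inner]
  have : ∀ n : ℕ, (2*(n:ℝ)+2)⁻¹*(2*(n:ℝ)+2)⁻¹*(2*(O n))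
      = 2 * ((2*(n:ℝ)+2)⁻¹*(2*(n:ℝ)+2)⁻¹*(O n)) := fun n => by ring
  rw [tsum_congr this, tsum_mul_left]

lemma main : T3 + 2*T21 = 2*T2*Real.log 2 := by
  have e1 := eqWA
  have e2 := eqWB
  have e3 := eqWC
  have e4 := eqZA
  have e5 := eqZC
  rw [← e2] at e5
  -- e5 : Z = 2 * W ; e4 : Z = log2*T2 + QQ ; e3 : W = T21 + QQ ; e1 : W = T3+T21-log2*T2
  have h1 : Real.log 2 * T2 + QQ = 2*(T21 + QQ) := by rw [← e4, ← e3]; exact e5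
  have h2 : T3 + T21 - Real.log 2 * T2 = T21 + QQ := by rw [← e1, ← e3]
  linarith


lemma sum_T21 : Summable (fun n : ℕ => (2*(n:ℝ)+3)⁻¹*(2*(n:ℝ)+3)⁻¹*(O n)) := by
  have := sum_OL
  rw [← summable_nat_add_iff 1] at this
  apply this.congr
  intro n
  have hc : (2*(((n+1:ℕ)):ℝ)+1) = 2*(n:ℝ)+3 := by push_cast; ring
  rw [hc]
  rfl


def eOdd : ℕ ≃ {f : Fin 1 → ℕ // StrictAnti f ∧ ∀ i, 0 < f i ∧ f i % 2 = 1 % 2} where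
  toFun i := ⟨fun _ => 2*i+1, by
    refine ⟨?_, fun x => ⟨?_, ?_⟩⟩
    · intro a b hab
      exact absurd (Fin.lt_def.mp hab) (by omega)
    · show 0 < 2*i+1
      omega
    · show (2*i+1) % 2 = 1 % 2
      omega⟩
  invFun f := (f.1 0 - 1)/2
  left_inv i := by
    show (2*i+1-1)/2 = i
    omega
  right_inv f := by
    apply Subtype.ext
    funext j
    obtain ⟨hs, hc⟩ := f.2
    have h0 := hc 0
    have hj : j = 0 := Subsingleton.elim j 0
    subst hj
    simp only
    omega

lemma tv3 : tv 2 1 [3] = T3 := by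
  show (∑' m : {f : Fin 1 → ℕ // StrictAnti f ∧ ∀ i, 0 < f i ∧ f i % 2 = 1 % 2},
    ∏ i : Fin 1, ((m.1 i : ℝ) ^ [3].get i)⁻¹) = T3
  rw [← Equiv.tsum_eq eOdd]
  apply tsum_congr
  intro i
  rw [Fin.prod_univ_one]
  show (((2*i+1 : ℕ):ℝ) ^ 3)⁻¹ = _
  push_cast
  rw [show ((2*(i:ℝ)+1)^3)⁻¹ = (2*(i:ℝ)+1)⁻¹*(2*(i:ℝ)+1)⁻¹*(2*(i:ℝ)+1)⁻¹ by
    rw [pow_succ, pow_succ, pow_one, mul_inv, mul_inv]]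

lemma tv2 : tv 2 1 [2] = T2 := by
  show (∑' m : {f : Fin 1 → ℕ // StrictAnti f ∧ ∀ i, 0 < f i ∧ f i % 2 = 1 % 2},
    ∏ i : Fin 1, ((m.1 i : ℝ) ^ [2].get i)⁻¹) = T2
  rw [← Equiv.tsum_eq eOdd]
  apply tsum_congr
  intro i
  rw [Fin.prod_univ_one]
  show (((2*i+1 : ℕ):ℝ) ^ 2)⁻¹ = _
  push_cast
  rw [show ((2*(i:ℝ)+1)^2)⁻¹ = (2*(i:ℝ)+1)⁻¹*(2*(i:ℝ)+1)⁻¹ by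
    rw [pow_two, mul_inv]]

def e21 : (Σ _n : ℕ, Fin (_n+1)) ≃
    {f : Fin 2 → ℕ // StrictAnti f ∧ ∀ i, 0 < f i ∧ f i % 2 = 1 % 2} where
  toFun x := ⟨![2*x.1+3, 2*(x.2:ℕ)+1], by
    have hk : (x.2:ℕ) < x.1+1 := x.2.2
    refine ⟨?_, ?_⟩
    · intro a b hab
      have hab' := Fin.lt_def.mp hab
      have ha : a = 0 := by omega
      have hb : b = 1 := by omega
      subst ha; subst hb
      simp only [Matrix.cons_val_one, Matrix.head_cons, Matrix.cons_val_zero]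
      omega
    · intro i
      fin_cases i <;> simp <;> omega⟩
  invFun f := ⟨(f.1 0 - 3)/2, ⟨(f.1 1 - 1)/2, by
    obtain ⟨hs, hc⟩ := f.2
    have h0 := hc 0
    have h1 := hc 1
    have hlt : f.1 1 < f.1 0 := hs (by norm_num : (0:Fin 2) < 1)
    omega⟩⟩
  left_inv x := by
    obtain ⟨n, k⟩ := x
    have hk : (k:ℕ) < n+1 := k.2
    apply Sigma.ext
    · simp only [Matrix.cons_val_zero]
      omega
    · simp only [Matrix.cons_val_one, Matrix.head_cons]
      rw [Fin.heq_ext_iff (by simp only [Matrix.cons_val_zero]; omega)]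
      simp only [Matrix.cons_val_zero]
      omega
  right_inv f := by
    apply Subtype.ext
    obtain ⟨hs, hc⟩ := f.2
    have h0 := hc 0
    have h1 := hc 1
    have hlt : f.1 1 < f.1 0 := hs (by norm_num : (0:Fin 2) < 1)
    funext j
    fin_cases j
    · simp only [Fin.mk_zero, Fin.isValue, Matrix.cons_val_zero]
      omega
    · simp only [Fin.mk_one, Fin.isValue, Matrix.cons_val_one, Matrix.head_cons, Matrix.cons_val_zero]
      omega

lemma tv21 : tv 2 1 [2, 1] = T21 := by
  show (∑' m : {f : Fin 2 → ℕ // StrictAnti f ∧ ∀ i, 0 < f i ∧ f i % 2 = 1 % 2},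
    ∏ i : Fin 2, ((m.1 i : ℝ) ^ [2,1].get i)⁻¹) = T21
  rw [← Equiv.tsum_eq e21]
  have hterm : ∀ x : Σ _n : ℕ, Fin (_n+1),
      (∏ i : Fin 2, (((e21 x).1 i : ℝ) ^ ([2,1].get i))⁻¹)
      = (2*(x.1:ℝ)+3)⁻¹*(2*(x.1:ℝ)+3)⁻¹*(2*((x.2:ℕ):ℝ)+1)⁻¹ := by
    intro x
    rw [Fin.prod_univ_two]
    show ((((2*x.1+3:ℕ)):ℝ)^2)⁻¹ * ((((2*(x.2:ℕ)+1:ℕ)):ℝ)^1)⁻¹ = _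
    push_cast
    rw [pow_two, pow_one, mul_inv]
  rw [tsum_congr hterm]
  have hnn : ∀ x : Σ _n : ℕ, Fin (_n+1),
      0 ≤ (2*(x.1:ℝ)+3)⁻¹*(2*(x.1:ℝ)+3)⁻¹*(2*((x.2:ℕ):ℝ)+1)⁻¹ := by
    intro x; positivity
  have hfiber : ∀ n : ℕ, ∑' k : Fin (n+1), (2*(n:ℝ)+3)⁻¹*(2*(n:ℝ)+3)⁻¹*(2*((k:ℕ):ℝ)+1)⁻¹
      = (2*(n:ℝ)+3)⁻¹*(2*(n:ℝ)+3)⁻¹*(O n) := by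
    intro n
    rw [tsum_fintype]
    rw [Fin.sum_univ_eq_sum_range (fun k => (2*(n:ℝ)+3)⁻¹*(2*(n:ℝ)+3)⁻¹*(2*(k:ℝ)+1)⁻¹) (n+1)]
    rw [← Finset.mul_sum]
    rfl
  have hsum : Summable (fun x : Σ _n : ℕ, Fin (_n+1) =>
      (2*(x.1:ℝ)+3)⁻¹*(2*(x.1:ℝ)+3)⁻¹*(2*((x.2:ℕ):ℝ)+1)⁻¹) := by
    rw [summable_sigma_of_nonneg hnn]
    constructor
    · intro n; exact (hasSum_fintype _).summable
    · apply sum_T21.congr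
      intro n
      exact (hfiber n).symm
  rw [hsum.tsum_sigma]
  unfold T21
  apply tsum_congr
  intro n
  exact hfiber n


end MTV

/-- Weighted sum formula in weight 3 for multiple t-values:
`t(3) + 2t(2,1) = 2t(2)log 2`. -/
theorem stmt9 : tv 2 1 [3] + 2 * tv 2 1 [2, 1] = 2 * tv 2 1 [2] * Real.log 2 := by
  rw [MTV.tv3, MTV.tv21, MTV.tv2]
  have := MTV.main
  linarith
end

section
/- One has −t*(3) + 2·t*(2,1) = 2·t(2)·log(2), where t*(3) = Σ_{m ≥ 1 odd} 1/m³, t(2) = Σ_{m ≥ 1 odd} 1/m² = π²/8, and t*(2,1) = Σ_{m₁ ≥ m₂ > 0, m₁, m₂ odd} 1/(m₁² m₂). -/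
/-- Multiple t-star value of level `N` with residue `a`:
`t*_{N,a}(k) = Σ_{m₁ ≥ ⋯ ≥ mₙ > 0, mᵢ ≡ a (mod N)} 1/(m₁^{k₁} ⋯ mₙ^{kₙ})`. -/
noncomputable def tsv (N a : ℕ) (k : List ℕ) : ℝ :=
  ∑' m : {f : Fin k.length → ℕ // Antitone f ∧ ∀ i, 0 < f i ∧ f i % N = a % N},
    ∏ i : Fin k.length, ((m.1 i : ℝ) ^ k.get i)⁻¹

open Filter Topology

private lemma tele {f : ℕ → ℝ} (h0 : Tendsto f atTop (𝓝 0))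
    (hmono : ∀ m n : ℕ, m ≤ n → f n ≤ f m) (d : ℕ) :
    HasSum (fun b => f b - f (b + d)) (∑ i ∈ Finset.range d, f i) := by
  have hnn : ∀ b, 0 ≤ f b - f (b + d) :=
    fun b => sub_nonneg.2 (hmono b (b + d) (Nat.le_add_right _ _))
  rw [hasSum_iff_tendsto_nat_of_nonneg hnn]
  have key : ∀ N : ℕ, ∑ b ∈ Finset.range N, (f b - f (b + d))
      = ∑ i ∈ Finset.range d, f i - ∑ i ∈ Finset.range d, f (N + i) := by
    intro N
    have h1 := Finset.sum_range_add f d N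
    have h2 := Finset.sum_range_add f N d
    rw [Finset.sum_sub_distrib]
    have h3 : ∑ b ∈ Finset.range N, f (b + d) = ∑ b ∈ Finset.range N, f (d + b) :=
      Finset.sum_congr rfl fun b _ => by rw [Nat.add_comm]
    rw [h3]
    rw [Nat.add_comm d N] at h1
    linarith
  simp only [key]
  have hlim : Tendsto (fun N => ∑ i ∈ Finset.range d, f (N + i)) atTop (𝓝 0) := by
    have h := tendsto_finset_sum (Finset.range d)
      (fun i (_ : i ∈ Finset.range d) => h0.comp (tendsto_add_atTop_nat i))
    simpa using h
  simpa using tendsto_const_nhds.sub hlim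

private lemma tendsto_aff (c : ℝ) : Tendsto (fun b : ℕ => (2 * (b : ℝ) + c)⁻¹) atTop (𝓝 0) := by
  apply tendsto_inv_atTop_zero.comp
  apply Filter.tendsto_atTop_add_const_right
  exact (tendsto_natCast_atTop_atTop).const_mul_atTop (by norm_num)

private lemma teleInv (c : ℝ) (hc : 0 < c) (d : ℕ) :
    HasSum (fun b : ℕ => (2 * (b : ℝ) + c)⁻¹ - (2 * ((b : ℝ) + (d : ℝ)) + c)⁻¹)
      (∑ i ∈ Finset.range d, (2 * (i : ℝ) + c)⁻¹) := by
  have h := tele (f := fun b : ℕ => (2 * (b : ℝ) + c)⁻¹) (tendsto_aff c)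
    (fun m n hmn => by
      have : (m : ℝ) ≤ n := Nat.cast_le.2 hmn
      apply inv_anti₀ (by positivity)
      linarith) d
  refine h.congr_fun fun b => ?_ -- maybe wrong name
  push_cast
  ring_nf

private lemma psum_id (N : ℕ) :
    ∑ b ∈ Finset.range N, ((2 * (b:ℝ) + 1) * (2 * (b:ℝ) + 2))⁻¹
      = ∑ k ∈ Finset.Ico (N + 1) (2 * N + 1), ((k : ℝ))⁻¹ := by
  induction N with
  | zero => simp
  | succ N ih =>
    rw [Finset.sum_range_succ, ih]
    rcases Nat.eq_zero_or_pos N with h0 | hpos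
    · subst h0; norm_num [Finset.sum_Ico_eq_sum_range]
    · have hidx : 2 * (N + 1) + 1 = (2 * N + 1) + 1 + 1 := by omega
      have hidx2 : N + 1 + 1 = N + 2 := by omega
      rw [hidx, hidx2]
      have eTop1 : ∑ k ∈ Finset.Ico (N + 2) ((2 * N + 1) + 1 + 1), ((k : ℝ))⁻¹
          = ∑ k ∈ Finset.Ico (N + 2) ((2 * N + 1) + 1), ((k : ℝ))⁻¹ + ((2*(N:ℝ)+2))⁻¹ := by
        rw [Finset.sum_Ico_succ_top (by omega)]
        push_cast; ring_nf
      have eTop2 : ∑ k ∈ Finset.Ico (N + 2) ((2 * N + 1) + 1), ((k : ℝ))⁻¹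
          = ∑ k ∈ Finset.Ico (N + 2) (2 * N + 1), ((k : ℝ))⁻¹ + ((2*(N:ℝ)+1))⁻¹ := by
        rw [Finset.sum_Ico_succ_top (by omega)]
        push_cast; ring_nf
      have eBot : ∑ k ∈ Finset.Ico (N + 1) (2 * N + 1), ((k : ℝ))⁻¹
          = ((N:ℝ) + 1)⁻¹ + ∑ k ∈ Finset.Ico (N + 2) (2 * N + 1), ((k : ℝ))⁻¹ := by
        rw [Finset.sum_eq_sum_Ico_succ_bot (by omega)]
        norm_num
      have harith : ((N:ℝ) + 1)⁻¹ + ((2 * (N:ℝ) + 1) * (2 * (N:ℝ) + 2))⁻¹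
          = (2 * (N:ℝ) + 1)⁻¹ + (2 * (N:ℝ) + 2)⁻¹ := by
        have h1 : (0:ℝ) < (N:ℝ) + 1 := by positivity
        have h2 : (0:ℝ) < 2 * (N:ℝ) + 1 := by positivity
        have h3 : (0:ℝ) < 2 * (N:ℝ) + 2 := by positivity
        field_simp
        ring
      push_cast at eTop1 eTop2 eBot ⊢
      linarith

private lemma log_sum_ub {N : ℕ} (hN : 1 ≤ N) :
    ∑ k ∈ Finset.Ico (N + 1) (2 * N + 1), ((k : ℝ))⁻¹ ≤ Real.log 2 := by
  set g : ℕ → ℝ := fun j => Real.log ((j:ℝ) - 1) with hg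
  have key : ∀ k ∈ Finset.Ico (N + 1) (2 * N + 1), ((k:ℝ))⁻¹ ≤ g (k+1) - g k := by
    intro k hk
    simp only [Finset.mem_Ico] at hk
    have hk2 : (2:ℕ) ≤ k := by omega
    have hk2' : (2:ℝ) ≤ (k:ℝ) := by exact_mod_cast hk2
    have hkpos : (0:ℝ) < k := by linarith
    have h := Real.log_le_sub_one_of_pos (x := ((k:ℝ) - 1) / k) (div_pos (by linarith) hkpos)
    rw [Real.log_div (by linarith) (by linarith)] at h
    have hsimp : ((k:ℝ) - 1) / k - 1 = -(k:ℝ)⁻¹ := by field_simp; ring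
    rw [hsimp] at h
    have : g (k+1) - g k = Real.log (k:ℝ) - Real.log ((k:ℝ) - 1) := by
      simp only [hg]; push_cast; ring_nf
    rw [this]; linarith
  have htel : ∑ k ∈ Finset.Ico (N + 1) (2 * N + 1), (g (k+1) - g k) = Real.log 2 := by
    rw [Finset.sum_Ico_eq_sub _ (by omega), Finset.sum_range_sub g, Finset.sum_range_sub g]
    have hNpos : (0:ℝ) < (N:ℝ) := by exact_mod_cast hN
    have e1 : g (2 * N + 1) = Real.log (2 * (N:ℝ)) := by simp only [hg]; push_cast; ring_nf
    have e2 : g (N + 1) = Real.log (N:ℝ) := by simp only [hg]; push_cast; ring_nf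
    rw [e1, e2]
    rw [Real.log_mul (by norm_num) (ne_of_gt hNpos)]
    ring
  calc ∑ k ∈ Finset.Ico (N + 1) (2 * N + 1), ((k : ℝ))⁻¹
      ≤ ∑ k ∈ Finset.Ico (N + 1) (2 * N + 1), (g (k+1) - g k) := Finset.sum_le_sum key
    _ = Real.log 2 := htel

private lemma log_sum_lb (N : ℕ) :
    Real.log ((2 * (N:ℝ) + 1) / ((N:ℝ) + 1))
      ≤ ∑ k ∈ Finset.Ico (N + 1) (2 * N + 1), ((k : ℝ))⁻¹ := by
  set g : ℕ → ℝ := fun j => Real.log ((j:ℝ)) with hg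
  have key : ∀ k ∈ Finset.Ico (N + 1) (2 * N + 1), g (k+1) - g k ≤ ((k:ℝ))⁻¹ := by
    intro k hk
    simp only [Finset.mem_Ico] at hk
    have hk1 : (1:ℕ) ≤ k := by omega
    have hk1' : (1:ℝ) ≤ (k:ℝ) := by exact_mod_cast hk1
    have hkpos : (0:ℝ) < k := by linarith
    have h := Real.log_le_sub_one_of_pos (x := ((k:ℝ) + 1) / k) (by positivity)
    rw [Real.log_div (by linarith) (by linarith)] at h
    have hsimp : ((k:ℝ) + 1) / k - 1 = (k:ℝ)⁻¹ := by field_simp; ring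
    rw [hsimp] at h
    have : g (k+1) - g k = Real.log ((k:ℝ) + 1) - Real.log (k:ℝ) := by
      simp only [hg]; push_cast; ring_nf
    rw [this]; linarith
  have htel : ∑ k ∈ Finset.Ico (N + 1) (2 * N + 1), (g (k+1) - g k)
      = Real.log ((2 * (N:ℝ) + 1) / ((N:ℝ) + 1)) := by
    rw [Finset.sum_Ico_eq_sub _ (by omega), Finset.sum_range_sub g, Finset.sum_range_sub g]
    have e1 : g (2 * N + 1) = Real.log (2 * (N:ℝ) + 1) := by simp only [hg]; push_cast; ring_nf
    have e2 : g (N + 1) = Real.log ((N:ℝ) + 1) := by simp only [hg]; push_cast; ring_nf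
    rw [e1, e2, Real.log_div (by positivity) (by positivity)]
    ring
  calc Real.log ((2 * (N:ℝ) + 1) / ((N:ℝ) + 1))
      = ∑ k ∈ Finset.Ico (N + 1) (2 * N + 1), (g (k+1) - g k) := htel.symm
    _ ≤ ∑ k ∈ Finset.Ico (N + 1) (2 * N + 1), ((k : ℝ))⁻¹ := Finset.sum_le_sum key

private lemma hL : HasSum (fun b : ℕ => ((2 * (b:ℝ) + 1) * (2 * (b:ℝ) + 2))⁻¹) (Real.log 2) := by
  have hnn : ∀ b : ℕ, 0 ≤ ((2 * (b:ℝ) + 1) * (2 * (b:ℝ) + 2))⁻¹ := fun b => by positivity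
  rw [hasSum_iff_tendsto_nat_of_nonneg hnn]
  have heq : (fun N : ℕ => ∑ b ∈ Finset.range N, ((2 * (b:ℝ) + 1) * (2 * (b:ℝ) + 2))⁻¹)
      = fun N : ℕ => ∑ k ∈ Finset.Ico (N + 1) (2 * N + 1), ((k : ℝ))⁻¹ := by
    funext N; exact psum_id N
  rw [heq]
  have hlb : Tendsto (fun N : ℕ => Real.log ((2 * (N:ℝ) + 1) / ((N:ℝ) + 1))) atTop (𝓝 (Real.log 2)) := by
    have harg : Tendsto (fun N : ℕ => (2 * (N:ℝ) + 1) / ((N:ℝ) + 1)) atTop (𝓝 2) := by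
      have : ∀ N : ℕ, (2 * (N:ℝ) + 1) / ((N:ℝ) + 1) = 2 - ((N:ℝ) + 1)⁻¹ := by
        intro N
        have : ((N:ℝ) + 1) ≠ 0 := by positivity
        field_simp
        ring
      simp only [this]
      have h2 : Tendsto (fun N : ℕ => ((N:ℝ) + 1)⁻¹) atTop (𝓝 0) := by
        apply tendsto_inv_atTop_zero.comp
        apply Filter.tendsto_atTop_add_const_right
        exact tendsto_natCast_atTop_atTop
      simpa using tendsto_const_nhds.sub h2
    exact ((Real.continuousAt_log (by norm_num)).tendsto.comp harg)
  apply tendsto_of_tendsto_of_tendsto_of_le_of_le' hlb tendsto_const_nhds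
  · exact Eventually.of_forall log_sum_lb
  · filter_upwards [eventually_ge_atTop 1] with N hN
    exact log_sum_ub hN

private lemma sum_inv_odd_le (n : ℕ) :
    ∑ i ∈ Finset.range n, (2 * (i:ℝ) + 1)⁻¹ ≤ 2 * Real.sqrt n := by
  induction n with
  | zero => simp
  | succ n ih =>
    rw [Finset.sum_range_succ]
    set s := Real.sqrt ((n:ℝ) + 1) with hs
    set t := Real.sqrt (n:ℝ) with ht
    have hs0 : 0 ≤ s := Real.sqrt_nonneg _
    have ht0 : 0 ≤ t := Real.sqrt_nonneg _
    have hs2 : s ^ 2 = (n:ℝ) + 1 := Real.sq_sqrt (by positivity)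
    have ht2 : t ^ 2 = (n:ℝ) := Real.sq_sqrt (by positivity)
    have hts : t ≤ s := Real.sqrt_le_sqrt (by linarith)
    have hsle : s ≤ 2 * (n:ℝ) + 1 := by nlinarith
    have hpos : (0:ℝ) < 2 * (n:ℝ) + 1 := by positivity
    have key : (2 * (n:ℝ) + 1)⁻¹ ≤ 2 * (s - t) := by
      rw [inv_eq_one_div, div_le_iff₀ hpos]
      nlinarith
    have : ((n:ℕ):ℝ) + 1 = (((n+1:ℕ)):ℝ) := by push_cast; ring
    rw [← this] at *
    linarith

private lemma sq_summable : Summable (fun n : ℕ => (((n:ℝ) + 1) ^ 2)⁻¹) := by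
  have h := (Real.summable_one_div_nat_pow (p := 2)).2 (by norm_num)
  have h2 := (summable_nat_add_iff 1).2 h
  refine h2.congr fun n => ?_
  push_cast
  rw [one_div]

private lemma sqrt_master : Summable (fun n : ℕ => Real.sqrt ((n:ℝ) + 1) * (((n:ℝ) + 1) ^ 2)⁻¹) := by
  have h := Real.summable_one_div_nat_rpow (p := (3/2 : ℝ)) |>.2 (by norm_num)
  have h2 := (summable_nat_add_iff 1).2 h
  refine h2.congr fun n => ?_
  have hx : (0:ℝ) < (n:ℝ) + 1 := by positivity
  have hcast : ((n + 1 : ℕ) : ℝ) = (n:ℝ) + 1 := by push_cast; ring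
  rw [hcast, one_div]
  rw [show (3/2 : ℝ) = 2 - 1/2 by norm_num, Real.rpow_sub hx]
  rw [← Real.sqrt_eq_rpow, show ((2:ℝ)) = ((2:ℕ):ℝ) by norm_num, Real.rpow_natCast,
    inv_div, div_eq_mul_inv]


private lemma tendsto_aff1 (c : ℝ) : Tendsto (fun b : ℕ => ((b : ℝ) + c)⁻¹) atTop (𝓝 0) := by
  apply tendsto_inv_atTop_zero.comp
  apply Filter.tendsto_atTop_add_const_right
  exact tendsto_natCast_atTop_atTop


private lemma h1 : HasSum (fun n : ℕ => (((n:ℝ) + 1) * ((n:ℝ) + 2))⁻¹) 1 := by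
  have h := tele (f := fun n : ℕ => ((n : ℝ) + 1)⁻¹) (tendsto_aff1 1)
    (fun m n hmn => by
      have : (m:ℝ) ≤ n := Nat.cast_le.2 hmn
      apply inv_anti₀ (by positivity)
      linarith) 1
  simp only [Finset.range_one, Finset.sum_singleton] at h
  norm_num at h
  refine h.congr_fun fun n => ?_
  have h1 : ((n:ℝ) + 1) ≠ 0 := by positivity
  have h2' : ((n:ℝ) + 1 + 1) ≠ 0 := by positivity
  rw [inv_sub_inv h1 h2', show ((n:ℝ) + 1 + 1) - ((n:ℝ) + 1) = 1 by ring, one_div]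
  ring_nf



private lemma hL2 : HasSum (fun b : ℕ => ((2 * (b:ℝ) + 2) * (2 * (b:ℝ) + 3))⁻¹) (1 - Real.log 2) := by
  set h : ℕ → ℝ := fun n => (((n:ℝ) + 1) * ((n:ℝ) + 2))⁻¹ with hh
  have heven : (fun k : ℕ => h (2 * k)) = fun b : ℕ => ((2 * (b:ℝ) + 1) * (2 * (b:ℝ) + 2))⁻¹ := by
    funext k; simp only [hh]; push_cast; ring_nf
  have hodd : (fun k : ℕ => h (2 * k + 1)) = fun b : ℕ => ((2 * (b:ℝ) + 2) * (2 * (b:ℝ) + 3))⁻¹ := by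
    funext k; simp only [hh]; push_cast; ring_nf
  have hsumodd : Summable (fun b : ℕ => ((2 * (b:ℝ) + 2) * (2 * (b:ℝ) + 3))⁻¹) := by
    apply Summable.of_nonneg_of_le (fun b => by positivity) (fun b => ?_) hL.summable
    apply inv_anti₀ (by positivity)
    nlinarith [Nat.cast_nonneg (α := ℝ) b]
  set S := ∑' b : ℕ, ((2 * (b:ℝ) + 2) * (2 * (b:ℝ) + 3))⁻¹ with hS
  have hcomb : HasSum h (Real.log 2 + S) := by
    apply HasSum.even_add_odd
    · rw [heven]; exact hL
    · rw [hodd]; exact hsumodd.hasSum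
  have : Real.log 2 + S = 1 := hcomb.unique h1
  have hS1 : S = 1 - Real.log 2 := by linarith
  rw [← hS1]
  exact hsumodd.hasSum



private noncomputable def O2 (c : ℕ) : ℝ := ∑ i ∈ Finset.range (c+1), (2*(i:ℝ)+1)⁻¹
private noncomputable def E2 (a : ℕ) : ℝ := ∑ i ∈ Finset.range a, (2*(i:ℝ)+2)⁻¹

private lemma rowOO (a : ℕ) :
    HasSum (fun b : ℕ => ((2*(a:ℝ)+1) * (2*(b:ℝ)+1) * (2*(a:ℝ)+2*(b:ℝ)+2))⁻¹)
      (((2*(a:ℝ)+1)^2)⁻¹ * (Real.log 2 + E2 a)) := by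
  have base := (hL.add (teleInv 2 (by norm_num) a)).mul_left (((2*(a:ℝ)+1)^2)⁻¹)
  rw [show (∑ i ∈ Finset.range a, (2 * (i : ℝ) + 2)⁻¹) = E2 a from rfl] at base
  refine base.congr_fun fun b => ?_
  have h1 : (2*(a:ℝ)+1) ≠ 0 := by positivity
  have h2 : (2*(b:ℝ)+1) ≠ 0 := by positivity
  have h3 : (2*(b:ℝ)+2) ≠ 0 := by positivity
  have h4 : (2*(a:ℝ)+2*(b:ℝ)+2) ≠ 0 := by positivity
  have h5 : (2*((b:ℝ)+(a:ℝ))+2) ≠ 0 := by positivity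
  field_simp
  ring

private lemma rowEO (a : ℕ) :
    HasSum (fun b : ℕ => ((2*(a:ℝ)+2) * (2*(b:ℝ)+1) * (2*(a:ℝ)+2*(b:ℝ)+3))⁻¹)
      (((2*(a:ℝ)+2)^2)⁻¹ * O2 a) := by
  have base := (teleInv 1 (by norm_num) (a+1)).mul_left (((2*(a:ℝ)+2)^2)⁻¹)
  have hv : (∑ i ∈ Finset.range (a+1), (2 * (i : ℝ) + 1)⁻¹) = O2 a := rfl
  rw [hv] at base
  refine base.congr_fun fun b => ?_
  have h1 : (2*(a:ℝ)+2) ≠ 0 := by positivity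
  have h2 : (2*(b:ℝ)+1) ≠ 0 := by positivity
  have h3 : (2*(a:ℝ)+2*(b:ℝ)+3) ≠ 0 := by positivity
  have h5 : (2*((b:ℝ)+((a+1:ℕ):ℝ))+1) ≠ 0 := by positivity
  push_cast
  field_simp
  ring

private lemma O2_eq (a : ℕ) : O2 a = 1 + ∑ i ∈ Finset.range a, (2*(i:ℝ)+3)⁻¹ := by
  rw [O2, Finset.sum_range_succ']
  push_cast
  norm_num
  rw [add_comm]
  congr 1
  · refine Finset.sum_congr rfl fun i _ => ?_
    ring_nf

private lemma rowOE (a : ℕ) :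
    HasSum (fun b : ℕ => ((2*(a:ℝ)+1) * (2*(b:ℝ)+2) * (2*(a:ℝ)+2*(b:ℝ)+3))⁻¹)
      (((2*(a:ℝ)+1)^2)⁻¹ * (O2 a - Real.log 2)) := by
  have base := (hL2.add (teleInv 3 (by norm_num) a)).mul_left (((2*(a:ℝ)+1)^2)⁻¹)
  have hval : 1 - Real.log 2 + (∑ i ∈ Finset.range a, (2 * (i : ℝ) + 3)⁻¹)
      = O2 a - Real.log 2 := by rw [O2_eq]; ring
  rw [hval] at base
  refine base.congr_fun fun b => ?_
  have h1 : (2*(a:ℝ)+1) ≠ 0 := by positivity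
  have h3 : (2*(b:ℝ)+2) ≠ 0 := by positivity
  have h3' : (2*(b:ℝ)+3) ≠ 0 := by positivity
  have h4 : (2*(a:ℝ)+2*(b:ℝ)+3) ≠ 0 := by positivity
  have h5 : (2*((b:ℝ)+(a:ℝ))+3) ≠ 0 := by positivity
  field_simp
  ring

private lemma tailSum (c : ℝ) (hc : 0 < c) :
    HasSum (fun b : ℕ => ((2*(b:ℝ)+c) * (2*(b:ℝ)+c+2))⁻¹) ((2*c)⁻¹) := by
  have base := (teleInv c hc 1).mul_left (1/2 : ℝ)
  simp only [Finset.range_one, Finset.sum_singleton, Nat.cast_zero, mul_zero, zero_add,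
    Nat.cast_one] at base
  have hval : (1/2 : ℝ) * c⁻¹ = (2*c)⁻¹ := by
    rw [mul_inv]; norm_num
  rw [hval] at base
  refine base.congr_fun fun b => ?_
  have hb1 : (2*(b:ℝ)+c) ≠ 0 := by positivity
  have hb2 : (2*((b:ℝ)+1)+c) ≠ 0 := by positivity
  have hb3 : (2*(b:ℝ)+c+2) ≠ 0 := by positivity
  field_simp
  ring

private lemma tri {g : ℕ → ℕ → ℝ} (h0 : ∀ c a, 0 ≤ g c a)
    (hrow : Summable fun c => ∑ a ∈ Finset.range (c+1), g c a) :
    HasSum (fun p : ℕ × ℕ => g (p.1 + p.2) p.1)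
      (∑' c, ∑ a ∈ Finset.range (c+1), g c a) := by
  classical
  set G : ℕ × ℕ → ℝ := fun q => if q.2 ≤ q.1 then g q.1 q.2 else 0 with hG
  have hGnn : 0 ≤ G := by
    intro q
    by_cases h : q.2 ≤ q.1 <;> simp [hG, h, h0]
  have hrows : ∀ c, Summable fun a => G (c, a) := by
    intro c
    apply summable_of_ne_finset_zero (s := Finset.range (c+1))
    intro a ha
    simp only [Finset.mem_range] at ha
    have : ¬ a ≤ c := by omega
    simp [hG, this]
  have hrowval : ∀ c, ∑' a, G (c, a) = ∑ a ∈ Finset.range (c+1), g c a := by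
    intro c
    rw [tsum_eq_sum (s := Finset.range (c+1))
      (fun a ha => by
        simp only [Finset.mem_range] at ha
        have : ¬ a ≤ c := by omega
        simp [hG, this])]
    refine Finset.sum_congr rfl fun a ha => ?_
    simp only [Finset.mem_range] at ha
    have : a ≤ c := by omega
    simp [hG, this]
  have hGsum : Summable G := by
    rw [summable_prod_of_nonneg hGnn]
    exact ⟨hrows, by simpa only [hrowval] using hrow⟩
  set i : ℕ × ℕ → ℕ × ℕ := fun p => (p.1 + p.2, p.1) with hi
  have hinj : Function.Injective i := by
    intro p q h
    simp only [hi, Prod.mk.injEq] at h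
    have h1 : p.1 = q.1 := h.2
    have h2 : p.2 = q.2 := by omega
    exact Prod.ext h1 h2
  have hsupp : Function.support G ⊆ Set.range i := by
    intro q hq
    by_cases h : q.2 ≤ q.1
    · exact ⟨(q.2, q.1 - q.2), by 
        have e1 : q.2 + (q.1 - q.2) = q.1 := by omega
        simp only [hi]
        rw [e1]⟩
    · exfalso; apply hq; simp [hG, h]
  have hfun : (fun p : ℕ × ℕ => G (i p)) = fun p : ℕ × ℕ => g (p.1 + p.2) p.1 := by
    funext p
    have : p.1 ≤ p.1 + p.2 := Nat.le_add_right _ _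
    simp [hG, hi, this]
  have hts : ∑' p : ℕ × ℕ, g (p.1 + p.2) p.1 = ∑' c, ∑ a ∈ Finset.range (c+1), g c a := by
    rw [← hfun, hinj.tsum_eq hsupp, Summable.tsum_prod' hGsum hrows]
    simp only [hrowval]
  have hs2 : Summable fun p : ℕ × ℕ => g (p.1 + p.2) p.1 := by
    rw [← hfun]
    exact hGsum.comp_injective hinj
  exact hts ▸ hs2.hasSum

private def eqS : ℕ ≃ {f : Fin 1 → ℕ // StrictAnti f ∧ ∀ i, 0 < f i ∧ f i % 2 = 1 % 2} where
  toFun n := ⟨fun _ => 2*n+1, fun i j hij => absurd hij (by simp [Subsingleton.elim i j]),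
    fun i => by show 0 < 2*n+1 ∧ (2*n+1) % 2 = 1 % 2; omega⟩
  invFun m := (m.1 0 - 1)/2
  left_inv n := by simp
  right_inv m := by
    obtain ⟨f, hf1, hf2⟩ := m
    apply Subtype.ext
    funext i
    have h0 := hf2 0
    have : i = 0 := Subsingleton.elim i 0
    subst this
    simp only
    omega

private def eqA : ℕ ≃ {f : Fin 1 → ℕ // Antitone f ∧ ∀ i, 0 < f i ∧ f i % 2 = 1 % 2} where
  toFun n := ⟨fun _ => 2*n+1, fun i j _ => le_rfl,
    fun i => by show 0 < 2*n+1 ∧ (2*n+1) % 2 = 1 % 2; omega⟩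
  invFun m := (m.1 0 - 1)/2
  left_inv n := by simp
  right_inv m := by
    obtain ⟨f, hf1, hf2⟩ := m
    apply Subtype.ext
    funext i
    have h0 := hf2 0
    have : i = 0 := Subsingleton.elim i 0
    subst this
    simp only
    omega

private def eqB : ℕ × ℕ ≃ {f : Fin 2 → ℕ // Antitone f ∧ ∀ i, 0 < f i ∧ f i % 2 = 1 % 2} where
  toFun p := ⟨![2*(p.1+p.2)+1, 2*p.2+1], by
      intro i j hij
      fin_cases i <;> fin_cases j <;>
        simp_all [Matrix.cons_val_zero, Matrix.cons_val_one] <;> omega,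
    fun i => by fin_cases i <;> simp <;> omega⟩
  invFun m := ((m.1 0 - m.1 1)/2, (m.1 1 - 1)/2)
  left_inv p := by
    obtain ⟨a, b⟩ := p
    simp only [Matrix.cons_val_zero, Matrix.cons_val_one, Matrix.head_cons, Prod.mk.injEq]
    constructor <;> omega
  right_inv m := by
    obtain ⟨f, hf1, hf2⟩ := m
    apply Subtype.ext
    funext i
    have h0 := hf2 0
    have h1 := hf2 1
    have hle : f 1 ≤ f 0 := hf1 (by decide : (0 : Fin 2) ≤ 1)
    fin_cases i <;>
      simp only [Fin.mk_zero, Fin.mk_one, Matrix.cons_val_zero, Matrix.cons_val_one,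
        Matrix.head_cons] <;> omega

private lemma tv2_eq : tv 2 1 [2] = ∑' n : ℕ, ((2*(n:ℝ)+1)^2)⁻¹ := by
  rw [tv]
  show (∑' m : {f : Fin 1 → ℕ // StrictAnti f ∧ ∀ i, 0 < f i ∧ f i % 2 = 1 % 2},
    ∏ i : Fin 1, ((m.1 i : ℝ) ^ [2].get i)⁻¹) = _
  rw [← Equiv.tsum_eq eqS]
  apply tsum_congr
  intro n
  rw [Fin.prod_univ_one]
  simp only [eqS, Equiv.coe_fn_mk, List.get]
  push_cast
  ring_nf

private lemma tsv3_eq : tsv 2 1 [3] = ∑' n : ℕ, ((2*(n:ℝ)+1)^3)⁻¹ := by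
  rw [tsv]
  show (∑' m : {f : Fin 1 → ℕ // Antitone f ∧ ∀ i, 0 < f i ∧ f i % 2 = 1 % 2},
    ∏ i : Fin 1, ((m.1 i : ℝ) ^ [3].get i)⁻¹) = _
  rw [← Equiv.tsum_eq eqA]
  apply tsum_congr
  intro n
  rw [Fin.prod_univ_one]
  simp only [eqA, Equiv.coe_fn_mk, List.get]
  push_cast
  ring_nf

private lemma tsv21_eq : tsv 2 1 [2, 1]
    = ∑' p : ℕ × ℕ, ((2*(p.1:ℝ)+2*(p.2:ℝ)+1)^2)⁻¹ * (2*(p.2:ℝ)+1)⁻¹ := by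
  rw [tsv]
  show (∑' m : {f : Fin 2 → ℕ // Antitone f ∧ ∀ i, 0 < f i ∧ f i % 2 = 1 % 2},
    ∏ i : Fin 2, ((m.1 i : ℝ) ^ [2, 1].get i)⁻¹) = _
  rw [← Equiv.tsum_eq eqB]
  apply tsum_congr
  intro p
  rw [Fin.prod_univ_two]
  simp only [eqB, Equiv.coe_fn_mk, List.get, Matrix.cons_val_zero, Matrix.cons_val_one,
    Matrix.head_cons]
  push_cast
  ring_nf



private lemma hO2nn (c : ℕ) : 0 ≤ O2 c :=
  Finset.sum_nonneg fun i _ => by positivity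

private lemma hE2nn (a : ℕ) : 0 ≤ E2 a :=
  Finset.sum_nonneg fun i _ => by positivity

private lemma hO2b (c : ℕ) : O2 c ≤ 2 * Real.sqrt ((c:ℝ) + 1) := by
  have h := sum_inv_odd_le (c+1)
  rw [O2]
  calc ∑ i ∈ Finset.range (c+1), (2*(i:ℝ)+1)⁻¹ ≤ 2 * Real.sqrt ((c+1 : ℕ) : ℝ) := h
    _ = 2 * Real.sqrt ((c:ℝ) + 1) := by push_cast; ring_nf

private lemma hE2b' (a : ℕ) : E2 (a+1) ≤ 2 * Real.sqrt ((a:ℝ) + 1) := by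
  have h2 : E2 (a+1) ≤ ∑ i ∈ Finset.range (a+1), (2*(i:ℝ)+1)⁻¹ := by
    rw [E2]
    refine Finset.sum_le_sum fun i _ => ?_
    apply inv_anti₀ (by positivity)
    linarith
  calc E2 (a+1) ≤ ∑ i ∈ Finset.range (a+1), (2*(i:ℝ)+1)⁻¹ := h2
    _ ≤ 2 * Real.sqrt ((a+1 : ℕ) : ℝ) := sum_inv_odd_le (a+1)
    _ = 2 * Real.sqrt ((a:ℝ) + 1) := by push_cast; ring_nf

private lemma hE2b (a : ℕ) : E2 a ≤ 2 * Real.sqrt ((a:ℝ) + 1) := by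
  cases a with
  | zero => simp [E2]
  | succ n =>
    calc E2 (n+1) ≤ 2 * Real.sqrt ((n:ℝ) + 1) := hE2b' n
      _ ≤ 2 * Real.sqrt (((n+1 : ℕ):ℝ) + 1) := by
          have : ((n:ℝ) + 1) ≤ (((n+1:ℕ)):ℝ) + 1 := by push_cast; linarith
          nlinarith [Real.sqrt_le_sqrt this]
      _ = 2 * Real.sqrt (((n+1:ℕ):ℝ) + 1) := rfl

private lemma wsum {F : ℕ → ℝ} (h0 : ∀ c, 0 ≤ F c)
    (hb : ∀ c, F c ≤ 2 * Real.sqrt ((c:ℝ)+1)) {k : ℝ} (hk : 1 ≤ k) :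
    Summable (fun c : ℕ => ((2*(c:ℝ)+k)^2)⁻¹ * F c) := by
  apply Summable.of_nonneg_of_le (fun c => ?_) (fun c => ?_) (sqrt_master.mul_left 2)
  · have := h0 c
    have : (0:ℝ) < (2*(c:ℝ)+k)^2 := by positivity
    positivity
  · have h1 : ((c:ℝ)+1)^2 ≤ (2*(c:ℝ)+k)^2 := by nlinarith [Nat.cast_nonneg (α := ℝ) c]
    have h2 : ((2*(c:ℝ)+k)^2)⁻¹ ≤ (((c:ℝ)+1)^2)⁻¹ := inv_anti₀ (by positivity) h1
    calc ((2*(c:ℝ)+k)^2)⁻¹ * F c ≤ (((c:ℝ)+1)^2)⁻¹ * (2*Real.sqrt ((c:ℝ)+1)) :=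
          mul_le_mul h2 (hb c) (h0 c) (by positivity)
      _ = 2 * (Real.sqrt ((c:ℝ)+1) * (((c:ℝ)+1)^2)⁻¹) := by ring

private lemma St2 : Summable (fun n : ℕ => ((2*(n:ℝ)+1)^2)⁻¹) := by
  apply Summable.of_nonneg_of_le (fun n => by positivity) (fun n => ?_) sq_summable
  apply inv_anti₀ (by positivity)
  nlinarith [Nat.cast_nonneg (α := ℝ) n]

private lemma St3 : Summable (fun n : ℕ => ((2*(n:ℝ)+1)^3)⁻¹) := by
  apply Summable.of_nonneg_of_le (fun n => by positivity) (fun n => ?_) sq_summable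
  apply inv_anti₀ (by positivity)
  have h : (0:ℝ) ≤ (n:ℝ) := Nat.cast_nonneg n
  nlinarith [h, mul_nonneg (mul_nonneg h h) h, sq_nonneg (n:ℝ)]

private lemma STs : Summable (fun c : ℕ => ((2*(c:ℝ)+1)^2)⁻¹ * O2 c) :=
  wsum hO2nn hO2b le_rfl
private lemma SOe : Summable (fun c : ℕ => ((2*(c:ℝ)+2)^2)⁻¹ * O2 c) :=
  wsum hO2nn hO2b one_le_two
private lemma ST21 : Summable (fun c : ℕ => ((2*(c:ℝ)+3)^2)⁻¹ * O2 c) :=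
  wsum hO2nn hO2b (by norm_num)
private lemma SEo : Summable (fun a : ℕ => ((2*(a:ℝ)+1)^2)⁻¹ * E2 a) :=
  wsum hE2nn hE2b le_rfl
private lemma SEoD : Summable (fun c : ℕ => ((2*(c:ℝ)+3)^2)⁻¹ * E2 (c+1)) :=
  wsum (fun c => hE2nn (c+1)) hE2b' (by norm_num)



-- the double arrays
private noncomputable def SArr (p : ℕ × ℕ) : ℝ :=
  ((2*(p.1:ℝ)+2*(p.2:ℝ)+1)^2)⁻¹ * (2*(p.2:ℝ)+1)⁻¹
private noncomputable def t21Arr (p : ℕ × ℕ) : ℝ :=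
  ((2*(p.1:ℝ)+1) * (2*(p.1:ℝ)+2*(p.2:ℝ)+3)^2)⁻¹
private noncomputable def EoArr (p : ℕ × ℕ) : ℝ :=
  ((2*(p.2:ℝ)+2) * (2*(p.1:ℝ)+2*(p.2:ℝ)+3)^2)⁻¹
private noncomputable def P1Arr (p : ℕ × ℕ) : ℝ :=
  ((2*(p.1:ℝ)+1) * (2*(p.1:ℝ)+2*(p.2:ℝ)+2)^2)⁻¹
private noncomputable def P2Arr (p : ℕ × ℕ) : ℝ :=
  ((2*(p.2:ℝ)+1) * (2*(p.1:ℝ)+2*(p.2:ℝ)+2)^2)⁻¹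
private noncomputable def UooArr (p : ℕ × ℕ) : ℝ :=
  ((2*(p.1:ℝ)+1) * (2*(p.2:ℝ)+1) * (2*(p.1:ℝ)+2*(p.2:ℝ)+2))⁻¹
private noncomputable def UoeArr (p : ℕ × ℕ) : ℝ :=
  ((2*(p.1:ℝ)+1) * (2*(p.2:ℝ)+2) * (2*(p.1:ℝ)+2*(p.2:ℝ)+3))⁻¹
private noncomputable def UeoArr (p : ℕ × ℕ) : ℝ :=
  ((2*(p.1:ℝ)+2) * (2*(p.2:ℝ)+1) * (2*(p.1:ℝ)+2*(p.2:ℝ)+3))⁻¹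

-- values
private noncomputable def t2v : ℝ := ∑' n : ℕ, ((2*(n:ℝ)+1)^2)⁻¹
private noncomputable def t3v : ℝ := ∑' n : ℕ, ((2*(n:ℝ)+1)^3)⁻¹
private noncomputable def Tsv : ℝ := ∑' c : ℕ, ((2*(c:ℝ)+1)^2)⁻¹ * O2 c
private noncomputable def T21v : ℝ := ∑' c : ℕ, ((2*(c:ℝ)+3)^2)⁻¹ * O2 c
private noncomputable def Oev : ℝ := ∑' c : ℕ, ((2*(c:ℝ)+2)^2)⁻¹ * O2 c
private noncomputable def Eov : ℝ := ∑' a : ℕ, ((2*(a:ℝ)+1)^2)⁻¹ * E2 a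
private noncomputable def EoDv : ℝ := ∑' c : ℕ, ((2*(c:ℝ)+3)^2)⁻¹ * E2 (c+1)

-- tri applications
private lemma triApp (k : ℝ) (hk : 1 ≤ k)
    (hs : Summable fun c : ℕ => ((2*(c:ℝ)+k)^2)⁻¹ * O2 c) :
    HasSum (fun p : ℕ × ℕ => ((2*((p.1:ℝ)+(p.2:ℝ))+k)^2)⁻¹ * (2*(p.1:ℝ)+1)⁻¹)
      (∑' c : ℕ, ((2*(c:ℝ)+k)^2)⁻¹ * O2 c) := by
  have h := tri (g := fun c a => ((2*(c:ℝ)+k)^2)⁻¹ * (2*(a:ℝ)+1)⁻¹)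
    (fun c a => by positivity)
    (by
      refine hs.congr fun c => ?_
      rw [O2, Finset.mul_sum])
  have hval : (∑' c, ∑ a ∈ Finset.range (c+1), ((2*(c:ℝ)+k)^2)⁻¹ * (2*(a:ℝ)+1)⁻¹)
      = ∑' c : ℕ, ((2*(c:ℝ)+k)^2)⁻¹ * O2 c := by
    refine tsum_congr fun c => ?_
    rw [O2, Finset.mul_sum]
  rw [hval] at h
  refine h.congr_fun fun p => ?_
  push_cast
  ring_nf

private lemma hTs : HasSum SArr Tsv := by
  have h := triApp 1 le_rfl STs
  rw [show (∑' c : ℕ, ((2*(c:ℝ)+1)^2)⁻¹ * O2 c) = Tsv from rfl] at h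
  have h2 : HasSum (fun p : ℕ × ℕ => SArr ((Equiv.prodComm ℕ ℕ) p)) Tsv := by
    refine h.congr_fun fun p => ?_
    simp only [SArr, Equiv.prodComm_apply, Prod.snd_swap, Prod.fst_swap]
    push_cast
    ring_nf
  exact ((Equiv.prodComm ℕ ℕ).hasSum_iff).1 h2

private lemma ht21 : HasSum t21Arr T21v := by
  have h := tri (g := fun c a => ((2*(a:ℝ)+1) * (2*(c:ℝ)+3)^2)⁻¹)
    (fun c a => by positivity)
    (by
      refine ST21.congr fun c => ?_
      rw [O2, Finset.mul_sum]
      refine Finset.sum_congr rfl fun a _ => ?_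
      simp only [mul_inv]
      ring)
  have hval : (∑' c, ∑ a ∈ Finset.range (c+1), ((2*(a:ℝ)+1) * (2*(c:ℝ)+3)^2)⁻¹)
      = T21v := by
    rw [show T21v = ∑' c : ℕ, ((2*(c:ℝ)+3)^2)⁻¹ * O2 c from rfl]
    refine tsum_congr fun c => ?_
    rw [O2, Finset.mul_sum]
    refine Finset.sum_congr rfl fun a _ => ?_
    simp only [mul_inv]
    ring
  rw [hval] at h
  refine h.congr_fun fun p => ?_
  simp only [t21Arr]
  push_cast
  ring_nf

private lemma hP1 : HasSum P1Arr Oev := by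
  have h := tri (g := fun c a => ((2*(a:ℝ)+1) * (2*(c:ℝ)+2)^2)⁻¹)
    (fun c a => by positivity)
    (by
      refine SOe.congr fun c => ?_
      rw [O2, Finset.mul_sum]
      refine Finset.sum_congr rfl fun a _ => ?_
      simp only [mul_inv]
      ring)
  have hval : (∑' c, ∑ a ∈ Finset.range (c+1), ((2*(a:ℝ)+1) * (2*(c:ℝ)+2)^2)⁻¹)
      = Oev := by
    rw [show Oev = ∑' c : ℕ, ((2*(c:ℝ)+2)^2)⁻¹ * O2 c from rfl]
    refine tsum_congr fun c => ?_
    rw [O2, Finset.mul_sum]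
    refine Finset.sum_congr rfl fun a _ => ?_
    simp only [mul_inv]
    ring
  rw [hval] at h
  refine h.congr_fun fun p => ?_
  simp only [P1Arr]
  push_cast
  ring_nf

private lemma hE2sum (c : ℕ) : ∑ a ∈ Finset.range (c+1), (2*(a:ℝ)+2)⁻¹ = E2 (c+1) := rfl

private lemma hEoD : HasSum EoArr EoDv := by
  have h := tri (g := fun c a => ((2*(a:ℝ)+2) * (2*(c:ℝ)+3)^2)⁻¹)
    (fun c a => by positivity)
    (by
      refine SEoD.congr fun c => ?_
      rw [← hE2sum c, Finset.mul_sum]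
      refine Finset.sum_congr rfl fun a _ => ?_
      simp only [mul_inv]
      ring)
  have hval : (∑' c, ∑ a ∈ Finset.range (c+1), ((2*(a:ℝ)+2) * (2*(c:ℝ)+3)^2)⁻¹)
      = EoDv := by
    rw [show EoDv = ∑' c : ℕ, ((2*(c:ℝ)+3)^2)⁻¹ * E2 (c+1) from rfl]
    refine tsum_congr fun c => ?_
    rw [← hE2sum c, Finset.mul_sum]
    refine Finset.sum_congr rfl fun a _ => ?_
    simp only [mul_inv]
    ring
  rw [hval] at h
  have h2 : HasSum (fun p : ℕ × ℕ => EoArr ((Equiv.prodComm ℕ ℕ) p)) EoDv := by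
    refine h.congr_fun fun p => ?_
    simp only [EoArr, Equiv.prodComm_apply, Prod.snd_swap, Prod.fst_swap]
    push_cast
    ring_nf
  exact ((Equiv.prodComm ℕ ℕ).hasSum_iff).1 h2

private lemma hP2 : HasSum P2Arr Oev := by
  have h2 : HasSum (fun p : ℕ × ℕ => P2Arr ((Equiv.prodComm ℕ ℕ) p)) Oev := by
    refine hP1.congr_fun fun p => ?_
    simp only [P1Arr, P2Arr, Equiv.prodComm_apply, Prod.snd_swap, Prod.fst_swap]
    ring_nf
  exact ((Equiv.prodComm ℕ ℕ).hasSum_iff).1 h2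

private lemma hUoo : HasSum UooArr (Oev + Oev) := by
  refine (hP1.add hP2).congr_fun fun p => ?_
  simp only [UooArr, P1Arr, P2Arr]
  have h1 : (2*(p.1:ℝ)+1) ≠ 0 := by positivity
  have h2 : (2*(p.2:ℝ)+1) ≠ 0 := by positivity
  have h3 : (2*(p.1:ℝ)+2*(p.2:ℝ)+2) ≠ 0 := by positivity
  field_simp
  ring

private lemma hUoe : HasSum UoeArr (T21v + EoDv) := by
  refine (ht21.add hEoD).congr_fun fun p => ?_
  simp only [UoeArr, t21Arr, EoArr]
  have h1 : (2*(p.1:ℝ)+1) ≠ 0 := by positivity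
  have h2 : (2*(p.2:ℝ)+2) ≠ 0 := by positivity
  have h3 : (2*(p.1:ℝ)+2*(p.2:ℝ)+3) ≠ 0 := by positivity
  field_simp
  ring

private lemma hUeo : HasSum UeoArr (T21v + EoDv) := by
  have h2 : HasSum (fun p : ℕ × ℕ => UeoArr ((Equiv.prodComm ℕ ℕ) p)) (T21v + EoDv) := by
    refine hUoe.congr_fun fun p => ?_
    simp only [UoeArr, UeoArr, Equiv.prodComm_apply, Prod.snd_swap, Prod.fst_swap]
    ring_nf
  exact ((Equiv.prodComm ℕ ℕ).hasSum_iff).1 h2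

private lemma FOO : Oev + Oev = Real.log 2 * t2v + Eov := by
  have hsum := hUoo.summable
  have h1 : ∑' p : ℕ × ℕ, UooArr p = ∑' (a : ℕ) (b : ℕ), UooArr (a, b) :=
    Summable.tsum_prod' hsum (fun a => hsum.prod_factor a)
  have h2 : ∀ a : ℕ, ∑' b : ℕ, UooArr (a, b) = ((2*(a:ℝ)+1)^2)⁻¹ * (Real.log 2 + E2 a) :=
    fun a => (rowOO a).tsum_eq
  have h3 : ∑' a : ℕ, ((2*(a:ℝ)+1)^2)⁻¹ * (Real.log 2 + E2 a)
      = Real.log 2 * t2v + Eov := by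
    have hterm : ∀ a : ℕ, ((2*(a:ℝ)+1)^2)⁻¹ * (Real.log 2 + E2 a)
        = Real.log 2 * ((2*(a:ℝ)+1)^2)⁻¹ + ((2*(a:ℝ)+1)^2)⁻¹ * E2 a := fun a => by ring
    rw [tsum_congr hterm, Summable.tsum_add (St2.mul_left (Real.log 2)) SEo, tsum_mul_left]
    rfl
  calc Oev + Oev = ∑' p : ℕ × ℕ, UooArr p := hUoo.tsum_eq.symm
    _ = Real.log 2 * t2v + Eov := by rw [h1, tsum_congr h2, h3]

private lemma FOE : T21v + EoDv = Tsv - Real.log 2 * t2v := by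
  have hsum := hUoe.summable
  have h1 : ∑' p : ℕ × ℕ, UoeArr p = ∑' (a : ℕ) (b : ℕ), UoeArr (a, b) :=
    Summable.tsum_prod' hsum (fun a => hsum.prod_factor a)
  have h2 : ∀ a : ℕ, ∑' b : ℕ, UoeArr (a, b) = ((2*(a:ℝ)+1)^2)⁻¹ * (O2 a - Real.log 2) :=
    fun a => (rowOE a).tsum_eq
  have h3 : ∑' a : ℕ, ((2*(a:ℝ)+1)^2)⁻¹ * (O2 a - Real.log 2)
      = Tsv - Real.log 2 * t2v := by
    have hterm : ∀ a : ℕ, ((2*(a:ℝ)+1)^2)⁻¹ * (O2 a - Real.log 2)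
        = ((2*(a:ℝ)+1)^2)⁻¹ * O2 a - Real.log 2 * ((2*(a:ℝ)+1)^2)⁻¹ := fun a => by ring
    rw [tsum_congr hterm, Summable.tsum_sub STs (St2.mul_left (Real.log 2)), tsum_mul_left]
    rfl
  calc T21v + EoDv = ∑' p : ℕ × ℕ, UoeArr p := hUoe.tsum_eq.symm
    _ = Tsv - Real.log 2 * t2v := by rw [h1, tsum_congr h2, h3]

private lemma FEO : T21v + EoDv = Oev := by
  have hsum := hUeo.summable
  have h1 : ∑' p : ℕ × ℕ, UeoArr p = ∑' (a : ℕ) (b : ℕ), UeoArr (a, b) :=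
    Summable.tsum_prod' hsum (fun a => hsum.prod_factor a)
  have h2 : ∀ a : ℕ, ∑' b : ℕ, UeoArr (a, b) = ((2*(a:ℝ)+2)^2)⁻¹ * O2 a :=
    fun a => (rowEO a).tsum_eq
  calc T21v + EoDv = ∑' p : ℕ × ℕ, UeoArr p := hUeo.tsum_eq.symm
    _ = Oev := by rw [h1, tsum_congr h2]; rfl

private lemma eqEoD : Eov = EoDv := by
  have h := Summable.tsum_eq_zero_add SEo
  have hE0 : E2 0 = 0 := by simp [E2]
  have hshift : ∀ a : ℕ, ((2*(((a+1:ℕ)):ℝ)+1)^2)⁻¹ * E2 (a+1)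
      = ((2*(a:ℝ)+3)^2)⁻¹ * E2 (a+1) := by
    intro a; push_cast; ring_nf
  calc Eov = ((2*((0:ℕ):ℝ)+1)^2)⁻¹ * E2 0 + ∑' a : ℕ, ((2*(((a+1:ℕ)):ℝ)+1)^2)⁻¹ * E2 (a+1) := h
    _ = ∑' a : ℕ, ((2*(a:ℝ)+3)^2)⁻¹ * E2 (a+1) := by rw [hE0, tsum_congr hshift]; simp
    _ = EoDv := rfl

private lemma eqR5 : Tsv = t3v + T21v := by
  have hsum := hTs.summable
  have hnn : 0 ≤ SArr := fun p => by
    have h1 : (0:ℝ) < (2*(p.1:ℝ)+2*(p.2:ℝ)+1)^2 := by positivity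
    have h2 : (0:ℝ) < 2*(p.2:ℝ)+1 := by positivity
    simp only [SArr]
    positivity
  have hrsum : Summable (fun a : ℕ => ∑' b : ℕ, SArr (a, b)) :=
    ((summable_prod_of_nonneg hnn).1 hsum).2
  have h1 : Tsv = ∑' (a : ℕ) (b : ℕ), SArr (a, b) := by
    rw [← hTs.tsum_eq]; exact Summable.tsum_prod' hsum (fun a => hsum.prod_factor a)
  have h2 := Summable.tsum_eq_zero_add hrsum
  have h3 : ∑' b : ℕ, SArr (0, b) = t3v := by
    rw [show t3v = ∑' n : ℕ, ((2*(n:ℝ)+1)^3)⁻¹ from rfl]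
    refine tsum_congr fun b => ?_
    simp only [SArr, Nat.cast_zero]
    rw [show ((2*(b:ℝ)+1)^3)⁻¹ = ((2*(b:ℝ)+1)^2)⁻¹ * (2*(b:ℝ)+1)⁻¹ by
      rw [pow_succ, mul_inv]]
    ring_nf
  have hinj : Function.Injective (fun p : ℕ × ℕ => (p.1+1, p.2)) := by
    intro p q hpq
    simp only [Prod.mk.injEq] at hpq
    exact Prod.ext (by omega) hpq.2
  have hS : Summable (fun p : ℕ × ℕ => SArr (p.1+1, p.2)) := hsum.comp_injective hinj
  have h4 : ∑' a : ℕ, ∑' b : ℕ, SArr (a+1, b) = ∑' p : ℕ × ℕ, SArr (p.1+1, p.2) :=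
    (Summable.tsum_prod' hS (fun a => hS.prod_factor a)).symm
  have h5 : ∑' p : ℕ × ℕ, SArr (p.1+1, p.2) = T21v := by
    rw [← ht21.tsum_eq, ← (Equiv.prodComm ℕ ℕ).tsum_eq t21Arr]
    refine tsum_congr fun p => ?_
    simp only [SArr, t21Arr, Equiv.prodComm_apply, Prod.fst_swap, Prod.snd_swap, mul_inv]
    push_cast
    ring_nf
  rw [h1, h2, h3]
  rw [h4, h5]

private lemma core : -t3v + 2 * (∑' p : ℕ × ℕ, SArr p) = 2 * t2v * Real.log 2 := by
  have e0 : ∑' p : ℕ × ℕ, SArr p = Tsv := hTs.tsum_eq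
  have e1 := FOO
  have e2 := FOE
  have e3 := FEO
  have e4 := eqR5
  have e5 := eqEoD
  rw [e0]
  nlinarith [e1, e2, e3, e4, e5]

/-- Weighted sum formula in weight 3 for multiple t-star values:
`-t*(3) + 2t*(2,1) = 2t(2)log 2`. -/
theorem stmt10 : -tsv 2 1 [3] + 2 * tsv 2 1 [2, 1] = 2 * tv 2 1 [2] * Real.log 2 := by
  rw [tsv3_eq, tsv21_eq, tv2_eq]
  exact core
end

section
/- Let N be a positive integer, let a be an integer with 1 ≤ a ≤ N, let r be a real number, and let (k_1,…,k_n) be an index of positive integers. Then for real z with 0 < z < 1, the function z ↦ L^r_{N,a}(k_1,…,k_n;z) is differentiable and its derivative equals: (1/z)·L^r_{N,a}(k_1−1,k_2,…,k_n;z) if k_1 > 1; (r/z + z^{N−1}/(1−z^N))·L^r_{N,a}(k_2,…,k_n;z) if k_1 = 1 and n ≥ 2; and z^{a−1}/(1−z^N) if k_1 = n = 1. -/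
/-- All groupings of an index obtained by replacing each box in
`k₁ □ k₂ □ ⋯ □ kₙ` by a comma (new block) or a plus (merge). -/
def groupings : List ℕ → List (List ℕ)
  | [] => [[]]
  | [x] => [[x]]
  | x :: y :: rest => ((groupings (y :: rest)).map (x :: ·)) ++ groupings ((x + y) :: rest)
termination_by l => l.length

/-- The one-variable function
`L_{N,a}(k; z) = Σ_{m₁ > ⋯ > mₙ > 0, mᵢ ≡ a (mod N)} z^{m₁}/(m₁^{k₁} ⋯ mₙ^{kₙ})`. -/
noncomputable def Lv (N a : ℕ) (k : List ℕ) (z : ℝ) : ℝ :=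
  ∑' m : {f : Fin k.length → ℕ // StrictAnti f ∧ ∀ i, 0 < f i ∧ f i % N = a % N},
    (if h : 0 < k.length then z ^ (m.1 ⟨0, h⟩) else 1) *
      ∏ i : Fin k.length, ((m.1 i : ℝ) ^ k.get i)⁻¹

/-- The interpolated function `L^r_{N,a}(k; z) = Σ_p r^{n - dep(p)} L_{N,a}(p; z)`
over all groupings `p` of `k`. -/
noncomputable def iLv (N a : ℕ) (r : ℝ) (k : List ℕ) (z : ℝ) : ℝ :=
  ((groupings k).map (fun p => r ^ (k.length - p.length) * Lv N a p z)).sum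

section Key
variable {ι : Type*} (F : ι → ℕ)

/-- Master summability: if fibers of `F` are finite with polynomial cardinality bound,
then `∑ (F i)^q * b^(F i)` converges for `0 < b < 1`. -/
lemma key_summable (d : ℕ) (hfin : ∀ m, Finite {i // F i = m})
    (hcard : ∀ m, Nat.card {i // F i = m} ≤ (m + 1) ^ d)
    (q : ℕ) (b : ℝ) (hb0 : 0 < b) (hb1 : b < 1) :
    Summable (fun i => (F i : ℝ) ^ q * b ^ F i) := by
  have hM : Summable (fun m : ℕ => ((m : ℝ) + 1) ^ (d + q) * b ^ m) := by
    have h1 : Summable (fun n : ℕ => (n : ℝ) ^ (d + q) * b ^ n) :=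
      summable_pow_mul_geometric_of_norm_lt_one (d + q)
        (by rw [Real.norm_eq_abs, abs_of_pos hb0]; exact hb1)
    have h2 := ((summable_nat_add_iff 1).2 h1).mul_right b⁻¹
    refine h2.congr fun n => ?_
    push_cast
    rw [mul_assoc, pow_succ, mul_assoc, mul_inv_cancel₀ (ne_of_gt hb0), mul_one]
  refine (Equiv.sigmaFiberEquiv F).summable_iff.mp ?_
  have hnn : ∀ x : Σ m : ℕ, {i // F i = m},
      0 ≤ (fun i => (F i : ℝ) ^ q * b ^ F i) ((Equiv.sigmaFiberEquiv F) x) := by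
    intro x; positivity
  rw [show ((fun i => (F i : ℝ) ^ q * b ^ F i) ∘ ⇑(Equiv.sigmaFiberEquiv F))
      = fun x : Σ m : ℕ, {i // F i = m} => (fun i => (F i : ℝ) ^ q * b ^ F i) ((Equiv.sigmaFiberEquiv F) x) from rfl]
  rw [summable_sigma_of_nonneg hnn]
  constructor
  · intro m; haveI := hfin m; exact Summable.of_finite
  · have hval : ∀ m : ℕ, (∑' y : {i // F i = m},
        (fun i => (F i : ℝ) ^ q * b ^ F i) ((Equiv.sigmaFiberEquiv F) ⟨m, y⟩))
        = Nat.card {i // F i = m} • ((m : ℝ) ^ q * b ^ m) := by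
      intro m
      rw [show (∑' y : {i // F i = m},
        (fun i => (F i : ℝ) ^ q * b ^ F i) ((Equiv.sigmaFiberEquiv F) ⟨m, y⟩))
        = ∑' _ : {i // F i = m}, ((m : ℝ) ^ q * b ^ m) from tsum_congr fun y => by
          simp [Equiv.sigmaFiberEquiv, y.2]]
      exact tsum_const _
    refine Summable.of_nonneg_of_le (fun m => ?_) (fun m => ?_) hM
    · rw [hval m]; positivity
    · rw [hval m, nsmul_eq_mul]
      haveI := hfin m
      have h1 : (Nat.card {i // F i = m} : ℝ) ≤ ((m : ℝ) + 1) ^ d := by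
        calc (Nat.card {i // F i = m} : ℝ) ≤ (((m + 1) ^ d : ℕ) : ℝ) :=
              Nat.cast_le.mpr (hcard m)
          _ = ((m : ℝ) + 1) ^ d := by push_cast; ring
      have h2 : (m : ℝ) ^ q * b ^ m ≤ ((m : ℝ) + 1) ^ q * b ^ m :=
        mul_le_mul_of_nonneg_right
          (pow_le_pow_left₀ (by positivity) (by linarith) q) (by positivity)
      calc (Nat.card {i // F i = m} : ℝ) * ((m : ℝ) ^ q * b ^ m)
          ≤ ((m : ℝ) + 1) ^ d * (((m : ℝ) + 1) ^ q * b ^ m) :=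
            mul_le_mul h1 h2 (by positivity) (by positivity)
        _ = ((m : ℝ) + 1) ^ (d + q) * b ^ m := by rw [pow_add]; ring

/-- Summability of any function dominated by the master bound. -/
lemma key_summable_of_le (d : ℕ) (hfin : ∀ m, Finite {i // F i = m})
    (hcard : ∀ m, Nat.card {i // F i = m} ≤ (m + 1) ^ d)
    (g : ι → ℝ) (q : ℕ) (b C : ℝ) (hb0 : 0 < b) (hb1 : b < 1)
    (hg : ∀ i, ‖g i‖ ≤ C * ((F i : ℝ) ^ q * b ^ F i)) : Summable g :=
  Summable.of_norm_bounded ((key_summable F d hfin hcard q b hb0 hb1).mul_left C) hg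

/-- Key derivative lemma: term-by-term differentiation. -/
lemma key_hasDerivAt (w : ι → ℝ) (hF : ∀ i, 1 ≤ F i)
    (hw0 : ∀ i, 0 ≤ w i) (hw1 : ∀ i, w i ≤ 1) (d : ℕ)
    (hfin : ∀ m, Finite {i // F i = m})
    (hcard : ∀ m, Nat.card {i // F i = m} ≤ (m + 1) ^ d)
    (z : ℝ) (hz0 : 0 < z) (hz1 : z < 1) :
    HasDerivAt (fun t => ∑' i, t ^ F i * w i)
      (∑' i, (F i : ℝ) * z ^ (F i - 1) * w i) z := by
  set b : ℝ := (1 + z) / 2 with hb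
  have hb0 : 0 < b := by rw [hb]; linarith
  have hb1 : b < 1 := by rw [hb]; linarith
  have hu : Summable (fun i => (F i : ℝ) * b ^ (F i - 1)) := by
    refine key_summable_of_le F d hfin hcard _ 1 b b⁻¹ hb0 hb1 fun i => ?_
    rw [Real.norm_eq_abs, abs_of_nonneg (by positivity), pow_one]
    rw [show b ^ (F i - 1) = b ^ F i * b⁻¹ by
      rw [pow_sub₀ _ (ne_of_gt hb0) (hF i), pow_one]]
    ring_nf
    exact le_of_eq (by ring)
  refine hasDerivAt_tsum_of_isPreconnected (y₀ := (0:ℝ)) (t := Metric.ball (0:ℝ) b)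
    (g' := fun i y => (F i : ℝ) * y ^ (F i - 1) * w i) hu (Metric.isOpen_ball (x := (0:ℝ)) (ε := b))
    (convex_ball (0:ℝ) b).isPreconnected
    (fun i y _ => ((hasDerivAt_pow (F i) y).mul_const (w i)))
    (fun i y hy => ?_) ?_ ?_ ?_
  · rw [Real.norm_eq_abs, abs_mul, abs_mul]
    have hyb : |y| ≤ b := le_of_lt (by simpa [Real.dist_eq] using hy)
    have h1 : |(F i : ℝ)| * |y ^ (F i - 1)| ≤ (F i : ℝ) * b ^ (F i - 1) := by
      rw [abs_of_nonneg (by positivity : (0:ℝ) ≤ (F i : ℝ)), abs_pow]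
      exact mul_le_mul_of_nonneg_left (pow_le_pow_left₀ (abs_nonneg y) hyb _)
        (by positivity)
    have h2 : |w i| ≤ 1 := by rw [abs_of_nonneg (hw0 i)]; exact hw1 i
    calc |(F i : ℝ)| * |y ^ (F i - 1)| * |w i|
        ≤ ((F i : ℝ) * b ^ (F i - 1)) * 1 :=
          mul_le_mul h1 h2 (abs_nonneg _) (by positivity)
      _ = (F i : ℝ) * b ^ (F i - 1) := mul_one _
  · simpa [Real.dist_eq] using hb0
  · refine (summable_zero).congr fun i => ?_
    have := hF i
    simp [zero_pow (show F i ≠ 0 by omega)]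
  · simp only [Metric.mem_ball, Real.dist_eq, sub_zero, abs_of_pos hz0]
    linarith
end Key

section SIdx

/-- The index set of strictly decreasing tuples of positive integers `≡ a (mod N)`. -/
abbrev SIdx (N a n : ℕ) : Type :=
  {f : Fin n → ℕ // StrictAnti f ∧ ∀ i, 0 < f i ∧ f i % N = a % N}

variable {N a : ℕ}

private def fibInj (N a n m : ℕ) :
    {s : SIdx N a (n + 1) // s.1 0 = m} → (Fin (n + 1) → Fin (m + 1)) :=
  fun s i => ⟨s.1.1 i, by
    have h1 : s.1.1 i ≤ s.1.1 0 := s.1.2.1.antitone (Fin.zero_le i)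
    have h2 := s.2
    omega⟩

private lemma fibInj_injective (N a n m : ℕ) : Function.Injective (fibInj N a n m) := by
  intro x y h
  apply Subtype.ext; apply Subtype.ext; funext i
  have := congrFun h i
  simpa [fibInj, Fin.ext_iff] using this

lemma fiber_finite (N a n m : ℕ) : Finite {s : SIdx N a (n + 1) // s.1 0 = m} :=
  Finite.of_injective _ (fibInj_injective N a n m)

lemma fiber_card (N a n m : ℕ) :
    Nat.card {s : SIdx N a (n + 1) // s.1 0 = m} ≤ (m + 1) ^ (n + 1) := by
  have := Nat.card_le_card_of_injective _ (fibInj_injective N a n m)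
  simpa using this

/-- Master summability on `SIdx`. -/
lemma summable_SIdx (N a n : ℕ) (g : SIdx N a (n + 1) → ℝ) (q : ℕ) (b C : ℝ)
    (hb0 : 0 < b) (hb1 : b < 1)
    (hg : ∀ s, ‖g s‖ ≤ C * ((s.1 0 : ℝ) ^ q * b ^ (s.1 0))) : Summable g :=
  key_summable_of_le (fun s : SIdx N a (n + 1) => s.1 0) (n + 1)
    (fun m => fiber_finite N a n m) (fun m => fiber_card N a n m) g q b C hb0 hb1 hg

lemma sidx_pos (s : SIdx N a n) (i : Fin n) : 1 ≤ s.1 i := (s.2.2 i).1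

/-- Prepending a larger element to a decreasing tuple. -/
private lemma strictAnti_cons {n : ℕ} (m : ℕ) (g : Fin (n + 1) → ℕ)
    (hg : StrictAnti g) (hm : g 0 < m) :
    StrictAnti (Fin.cons m g : Fin (n + 2) → ℕ) := by
  intro i j hij
  rcases Fin.eq_zero_or_eq_succ j with rfl | ⟨j', rfl⟩
  · exact absurd hij (by simp)
  · rcases Fin.eq_zero_or_eq_succ i with rfl | ⟨i', rfl⟩
    · simpa using lt_of_le_of_lt (hg.antitone (Fin.zero_le j')) hm
    · have h : i' < j' := by simpa [Fin.succ_lt_succ_iff] using hij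
      simpa using hg h

/-- The equivalence `(g, j) ↦ (g₀ + (j+1)N) :: g`. -/
noncomputable def consEquiv (N a : ℕ) (hN : 1 ≤ N) (n : ℕ) :
    (SIdx N a (n + 1) × ℕ) ≃ SIdx N a (n + 2) := by
  refine Equiv.ofBijective (fun p =>
    ⟨Fin.cons (p.1.1 0 + (p.2 + 1) * N) p.1.1,
      strictAnti_cons _ _ p.1.2.1 (by
        have hN' : 0 < N := hN
        have h2 : 0 < (p.2 + 1) * N := Nat.mul_pos (Nat.succ_pos _) hN'
        omega), ?_⟩) ⟨?_, ?_⟩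
  · intro i
    rcases Fin.eq_zero_or_eq_succ i with rfl | ⟨i', rfl⟩
    · constructor
      · simp only [Fin.cons_zero]
        have := sidx_pos p.1 0
        positivity
      · simp only [Fin.cons_zero]
        rw [Nat.add_mul_mod_self_right]
        exact (p.1.2.2 0).2
    · simpa using p.1.2.2 i'
  · rintro ⟨⟨g, hg⟩, j⟩ ⟨⟨g', hg'⟩, j'⟩ h
    have hval : ∀ i, (Fin.cons (g 0 + (j + 1) * N) g : Fin (n + 2) → ℕ) i =
        (Fin.cons (g' 0 + (j' + 1) * N) g' : Fin (n + 2) → ℕ) i :=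
      fun i => congrFun (congrArg Subtype.val h) i
    have hgg : g = g' := funext fun i => by simpa using hval i.succ
    have h0 : g 0 + (j + 1) * N = g' 0 + (j' + 1) * N := by simpa using hval 0
    subst hgg
    have hN' : 0 < N := hN
    have : j + 1 = j' + 1 := Nat.eq_of_mul_eq_mul_right hN' (by omega)
    simp [show j = j' by omega]
  · rintro ⟨s, hs1, hs2⟩
    set g : Fin (n + 1) → ℕ := fun i => s i.succ with hgdef
    have hga : StrictAnti g := fun i j hij => hs1 (Fin.succ_lt_succ_iff.mpr hij)
    have hgp : ∀ i, 0 < g i ∧ g i % N = a % N := fun i => hs2 i.succ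
    have hlt : g 0 < s 0 := hs1 (Fin.succ_pos 0)
    have hmod : s 0 % N = g 0 % N := by rw [(hs2 0).2, (hgp 0).2]
    have hdvd : N ∣ s 0 - g 0 :=
      (Nat.modEq_iff_dvd' (le_of_lt hlt)).mp hmod.symm
    have hge : N ≤ s 0 - g 0 := Nat.le_of_dvd (by omega) hdvd
    obtain ⟨q, hq⟩ := hdvd
    refine ⟨⟨⟨g, hga, hgp⟩, q - 1⟩, ?_⟩
    apply Subtype.ext
    funext i
    rcases Fin.eq_zero_or_eq_succ i with rfl | ⟨i', rfl⟩
    · simp only [Fin.cons_zero]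
      have hq1 : 1 ≤ q := by
        rcases Nat.eq_zero_or_pos q with rfl | h
        · omega
        · exact h
      have : (q - 1 + 1) * N = N * q := by
        rw [Nat.sub_add_cancel hq1]; ring
      omega
    · simp [hgdef]

/-- The equivalence `j ↦ (a + jN)` for depth one. -/
noncomputable def nilEquiv (N a : ℕ) (hN : 1 ≤ N) (ha1 : 1 ≤ a) (ha2 : a ≤ N) :
    ℕ ≃ SIdx N a 1 := by
  refine Equiv.ofBijective (fun j =>
    ⟨fun _ => a + j * N, fun i j hij => absurd hij (by omega),
      fun i => ⟨Nat.lt_of_lt_of_le ha1 (Nat.le_add_right _ _), by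
        rw [Nat.add_mul_mod_self_right]⟩⟩) ⟨?_, ?_⟩
  · intro j j' h
    have h0 := congrFun (congrArg Subtype.val h) 0
    simp only at h0
    have hN' : 0 < N := hN
    have : j * N = j' * N := by omega
    exact Nat.eq_of_mul_eq_mul_right hN' this
  · rintro ⟨s, hs1, hs2⟩
    have h0 : 0 < s 0 := (hs2 0).1
    have h1 : s 0 % N = a % N := (hs2 0).2
    have h2 : a ≤ s 0 := by
      by_contra hcon
      push_neg at hcon
      have hm : s 0 < N := lt_of_lt_of_le hcon ha2
      rw [Nat.mod_eq_of_lt hm] at h1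
      rcases eq_or_lt_of_le ha2 with rfl | haN
      · simp [Nat.mod_self] at h1; omega
      · rw [Nat.mod_eq_of_lt haN] at h1; omega
    have hdvd : N ∣ s 0 - a := (Nat.modEq_iff_dvd' h2).mp h1.symm
    obtain ⟨q, hq⟩ := hdvd
    refine ⟨q, ?_⟩
    apply Subtype.ext
    funext i
    have hi : i = 0 := by omega
    subst hi
    simp only
    have : q * N = N * q := Nat.mul_comm q N
    omega

end SIdx

section LvLemmas

/-- Rewriting `Lv` for a nonempty index. -/
lemma Lv_eq (N a h : ℕ) (t : List ℕ) (z : ℝ) :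
    Lv N a (h :: t) z
      = ∑' s : SIdx N a (t.length + 1),
          z ^ s.1 0 * ∏ i : Fin (t.length + 1), ((s.1 i : ℝ) ^ (h :: t).get i)⁻¹ := by
  unfold Lv
  refine tsum_congr fun s => ?_
  rw [show (if h_1 : 0 < (h :: t).length then z ^ s.1 ⟨0, h_1⟩ else 1)
      = z ^ s.1 ⟨0, Nat.succ_pos t.length⟩ from dif_pos (Nat.succ_pos t.length)]
  rfl

private lemma prod_inv_nonneg {ι : Type*} [Fintype ι] (v K : ι → ℕ) :
    0 ≤ ∏ i, ((v i : ℝ) ^ K i)⁻¹ :=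
  Finset.prod_nonneg fun i _ => by positivity

private lemma prod_inv_le_one {ι : Type*} [Fintype ι] (v K : ι → ℕ) (hv : ∀ i, 1 ≤ v i) :
    ∏ i, ((v i : ℝ) ^ K i)⁻¹ ≤ 1 := by
  refine Finset.prod_le_one (fun i _ => by positivity) (fun i _ => ?_)
  have h1 : (1 : ℝ) ≤ (v i : ℝ) := by exact_mod_cast hv i
  exact inv_le_one_of_one_le₀ (one_le_pow₀ h1)

private lemma aux_big (z M P : ℝ) (hz : 0 < z) (hM : 0 < M) (k m : ℕ)
    (hk : 2 ≤ k) (hm : 1 ≤ m) :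
    1 / z * (z ^ m * ((M ^ (k - 1))⁻¹ * P)) = (M : ℝ) * z ^ (m - 1) * ((M ^ k)⁻¹ * P) := by
  have e1 : z ^ m = z ^ (m - 1) * z := by rw [← pow_succ]; congr 1; omega
  have e2 : M ^ k = M ^ (k - 1) * M := by rw [← pow_succ]; congr 1; omega
  rw [e1, e2, mul_inv]
  have h1 : M ≠ 0 := ne_of_gt hM
  have h2 : M ^ (k - 1) ≠ 0 := by positivity
  have h3 : z ≠ 0 := ne_of_gt hz
  field_simp

private lemma aux_one (z M P : ℝ) (hM : 0 < M) (q : ℕ) :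
    z ^ q * P = M * z ^ q * (M⁻¹ * P) := by
  rw [show M * z ^ q * (M⁻¹ * P) = (M * M⁻¹) * (z ^ q * P) from by ring,
    mul_inv_cancel₀ (ne_of_gt hM), one_mul]

private lemma cast_pos' {N a n : ℕ} (s : SIdx N a n) (i : Fin n) : (0 : ℝ) < (s.1 i : ℝ) := by
  exact_mod_cast sidx_pos s i

/-- The master derivative for `Lv` with a nonempty index. -/
lemma Lv_key (N a h : ℕ) (t : List ℕ) (z : ℝ) (hz0 : 0 < z) (hz1 : z < 1) :
    HasDerivAt (fun x => Lv N a (h :: t) x)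
      (∑' s : SIdx N a (t.length + 1),
        (s.1 0 : ℝ) * z ^ (s.1 0 - 1) *
          ∏ i : Fin (t.length + 1), ((s.1 i : ℝ) ^ (h :: t).get i)⁻¹) z := by
  have hfun : (fun x => Lv N a (h :: t) x)
      = (fun x => ∑' s : SIdx N a (t.length + 1),
          x ^ s.1 0 * ∏ i : Fin (t.length + 1), ((s.1 i : ℝ) ^ (h :: t).get i)⁻¹) := by
    funext x; exact Lv_eq N a h t x
  rw [hfun]
  exact key_hasDerivAt (fun s : SIdx N a (t.length + 1) => s.1 0)
    (fun s => ∏ i : Fin (t.length + 1), ((s.1 i : ℝ) ^ (h :: t).get i)⁻¹)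
    (fun s => sidx_pos s 0) (fun s => prod_inv_nonneg _ _)
    (fun s => prod_inv_le_one _ _ (fun i => sidx_pos s i))
    (t.length + 1) (fiber_finite N a t.length) (fiber_card N a t.length) z hz0 hz1

/-- Case `k ≥ 2`. -/
lemma Lv_hasDerivAt_big (N a : ℕ) (k : ℕ) (hk : 2 ≤ k) (tl : List ℕ)
    (z : ℝ) (hz0 : 0 < z) (hz1 : z < 1) :
    HasDerivAt (fun t => Lv N a (k :: tl) t) (1 / z * Lv N a ((k - 1) :: tl) z) z := by
  have hkey := Lv_key N a k tl z hz0 hz1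
  convert hkey using 1
  rw [Lv_eq, ← tsum_mul_left]
  refine tsum_congr fun s => ?_
  rw [Fin.prod_univ_succ, Fin.prod_univ_succ]
  simp only [List.get_cons_zero, List.get_cons_succ]
  exact aux_big z (s.1 0 : ℝ) _ hz0 (cast_pos' s 0) k (s.1 0) hk (sidx_pos s 0)

/-- Case `k₁ = 1`, nonempty tail. -/
lemma Lv_hasDerivAt_one_cons (N a : ℕ) (hN : 1 ≤ N) (c : ℕ) (rest : List ℕ)
    (z : ℝ) (hz0 : 0 < z) (hz1 : z < 1) :
    HasDerivAt (fun t => Lv N a (1 :: c :: rest) t)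
      (z ^ (N - 1) / (1 - z ^ N) * Lv N a (c :: rest) z) z := by
  have hkey := Lv_key N a 1 (c :: rest) z hz0 hz1
  convert hkey using 1
  have hzne : z ≠ 0 := ne_of_gt hz0
  have hzN0 : (0 : ℝ) ≤ z ^ N := by positivity
  have hzN1 : z ^ N < 1 := pow_lt_one₀ (le_of_lt hz0) hz1 (by omega)
  have hgeo : ∑' j : ℕ, (z ^ N) ^ j = (1 - z ^ N)⁻¹ := tsum_geometric_of_lt_one hzN0 hzN1
  -- the simplified derivative series over `SIdx (n+2)`
  have hf : ∀ s : SIdx N a (rest.length + 2), ‖z ^ (s.1 0 - 1) *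
      ∏ i : Fin (rest.length + 1), ((s.1 i.succ : ℝ) ^ ((c :: rest).get i))⁻¹‖
      ≤ z⁻¹ * ((s.1 0 : ℝ) ^ 0 * z ^ (s.1 0)) := by
    intro s
    have h0 : 0 ≤ ∏ i : Fin (rest.length + 1), ((s.1 i.succ : ℝ) ^ ((c :: rest).get i))⁻¹ :=
      prod_inv_nonneg _ _
    have h1 : ∏ i : Fin (rest.length + 1), ((s.1 i.succ : ℝ) ^ ((c :: rest).get i))⁻¹ ≤ 1 :=
      prod_inv_le_one _ _ (fun i => sidx_pos s i.succ)
    rw [Real.norm_eq_abs, abs_of_nonneg (by positivity), pow_zero, one_mul]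
    have hle : z ^ (s.1 0 - 1) * ∏ i : Fin (rest.length + 1),
        ((s.1 i.succ : ℝ) ^ ((c :: rest).get i))⁻¹ ≤ z ^ (s.1 0 - 1) * 1 :=
      mul_le_mul_of_nonneg_left h1 (by positivity)
    have heq : z ^ (s.1 0 - 1) = z⁻¹ * z ^ (s.1 0) := by
      have hs1 : 1 ≤ s.1 0 := sidx_pos s 0
      rw [show s.1 0 = (s.1 0 - 1) + 1 by omega, pow_succ]
      field_simp
      simp
    calc z ^ (s.1 0 - 1) * ∏ i : Fin (rest.length + 1),
          ((s.1 i.succ : ℝ) ^ ((c :: rest).get i))⁻¹ ≤ z ^ (s.1 0 - 1) * 1 := hle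
      _ = z⁻¹ * z ^ (s.1 0) := by rw [mul_one, heq]
  have hsum2 : Summable (fun s : SIdx N a (rest.length + 2) => z ^ (s.1 0 - 1) *
      ∏ i : Fin (rest.length + 1), ((s.1 i.succ : ℝ) ^ ((c :: rest).get i))⁻¹) :=
    summable_SIdx N a (rest.length + 1) _ 0 z z⁻¹ hz0 hz1 hf
  -- evaluate composition with the equivalence
  have he : ∀ p : SIdx N a (rest.length + 1) × ℕ,
      ((fun s : SIdx N a (rest.length + 2) => z ^ (s.1 0 - 1) *
        ∏ i : Fin (rest.length + 1), ((s.1 i.succ : ℝ) ^ ((c :: rest).get i))⁻¹)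
          ((consEquiv N a hN rest.length) p))
      = z ^ ((p.1.1 0 + (p.2 + 1) * N) - 1) *
          ∏ i : Fin (rest.length + 1), ((p.1.1 i : ℝ) ^ ((c :: rest).get i))⁻¹ := by
    rintro ⟨g, j⟩
    have hval : ((consEquiv N a hN rest.length) (g, j)).1
        = Fin.cons (g.1 0 + (j + 1) * N) g.1 := rfl
    simp only [hval, Fin.cons_zero, Fin.cons_succ]
  have hG : Summable (fun p : SIdx N a (rest.length + 1) × ℕ =>
      z ^ ((p.1.1 0 + (p.2 + 1) * N) - 1) *
        ∏ i : Fin (rest.length + 1), ((p.1.1 i : ℝ) ^ ((c :: rest).get i))⁻¹) :=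
    (((consEquiv N a hN rest.length).summable_iff.mpr hsum2).congr he)
  calc z ^ (N - 1) / (1 - z ^ N) * Lv N a (c :: rest) z
      = ∑' g : SIdx N a (rest.length + 1), z ^ (N - 1) * (1 - z ^ N)⁻¹ *
          (z ^ (g.1 0) * ∏ i : Fin (rest.length + 1), ((g.1 i : ℝ) ^ ((c :: rest).get i))⁻¹) := by
        rw [Lv_eq, ← tsum_mul_left, div_eq_mul_inv]
    _ = ∑' (g : SIdx N a (rest.length + 1)) (j : ℕ),
          z ^ ((g.1 0 + (j + 1) * N) - 1) *
            ∏ i : Fin (rest.length + 1), ((g.1 i : ℝ) ^ ((c :: rest).get i))⁻¹ := by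
        refine tsum_congr fun g => ?_
        have hg0 : 1 ≤ g.1 0 := sidx_pos g 0
        have hexp : ∀ j : ℕ, (g.1 0 + (j + 1) * N) - 1 = (g.1 0 + (N - 1)) + N * j := by
          intro j
          have : 0 < N := hN
          have : (j + 1) * N = N + N * j := by ring
          omega
        calc z ^ (N - 1) * (1 - z ^ N)⁻¹ *
              (z ^ (g.1 0) * ∏ i : Fin (rest.length + 1), ((g.1 i : ℝ) ^ ((c :: rest).get i))⁻¹)
            = ∑' j : ℕ, (z ^ (g.1 0 + (N - 1)) *
                ∏ i : Fin (rest.length + 1), ((g.1 i : ℝ) ^ ((c :: rest).get i))⁻¹) * (z ^ N) ^ j := by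
              rw [tsum_mul_left, hgeo, pow_add]; ring
          _ = ∑' j : ℕ, z ^ ((g.1 0 + (j + 1) * N) - 1) *
                ∏ i : Fin (rest.length + 1), ((g.1 i : ℝ) ^ ((c :: rest).get i))⁻¹ := by
              refine tsum_congr fun j => ?_
              rw [hexp j, pow_add z (g.1 0 + (N - 1)) (N * j), pow_mul]
              ring
    _ = ∑' s : SIdx N a (rest.length + 2), z ^ (s.1 0 - 1) *
          ∏ i : Fin (rest.length + 1), ((s.1 i.succ : ℝ) ^ ((c :: rest).get i))⁻¹ := by
        rw [← (consEquiv N a hN rest.length).tsum_eq (fun s : SIdx N a (rest.length + 2) =>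
          z ^ (s.1 0 - 1) * ∏ i : Fin (rest.length + 1),
            ((s.1 i.succ : ℝ) ^ ((c :: rest).get i))⁻¹)]
        rw [show (∑' p : SIdx N a (rest.length + 1) × ℕ,
          ((fun s : SIdx N a (rest.length + 2) => z ^ (s.1 0 - 1) *
            ∏ i : Fin (rest.length + 1), ((s.1 i.succ : ℝ) ^ ((c :: rest).get i))⁻¹)
              ((consEquiv N a hN rest.length) p)))
          = ∑' p : SIdx N a (rest.length + 1) × ℕ,
            z ^ ((p.1.1 0 + (p.2 + 1) * N) - 1) *
              ∏ i : Fin (rest.length + 1), ((p.1.1 i : ℝ) ^ ((c :: rest).get i))⁻¹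
          from tsum_congr he]
        exact (Summable.tsum_prod' hG (fun g => hG.prod_factor g)).symm
    _ = ∑' s : SIdx N a (rest.length + 2),
          (s.1 0 : ℝ) * z ^ (s.1 0 - 1) *
            ∏ i : Fin (rest.length + 2), ((s.1 i : ℝ) ^ ((1 :: c :: rest).get i))⁻¹ := by
        refine tsum_congr fun s => ?_
        rw [Fin.prod_univ_succ (fun i : Fin (rest.length + 2) =>
          ((s.1 i : ℝ) ^ ((1 :: c :: rest).get i))⁻¹)]
        simp only [List.get_cons_zero, List.get_cons_succ, pow_one]
        exact aux_one z (s.1 0 : ℝ) _ (cast_pos' s 0) _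


/-- Case `k₁ = 1`, empty tail. -/
lemma Lv_hasDerivAt_one_nil (N a : ℕ) (hN : 1 ≤ N) (ha1 : 1 ≤ a) (ha2 : a ≤ N)
    (z : ℝ) (hz0 : 0 < z) (hz1 : z < 1) :
    HasDerivAt (fun t => Lv N a [1] t) (z ^ (a - 1) / (1 - z ^ N)) z := by
  have hkey := Lv_key N a 1 [] z hz0 hz1
  convert hkey using 1
  have hzne : z ≠ 0 := ne_of_gt hz0
  have hzN0 : (0 : ℝ) ≤ z ^ N := by positivity
  have hzN1 : z ^ N < 1 := pow_lt_one₀ (le_of_lt hz0) hz1 (by omega)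
  have hgeo : ∑' j : ℕ, (z ^ N) ^ j = (1 - z ^ N)⁻¹ := tsum_geometric_of_lt_one hzN0 hzN1
  calc z ^ (a - 1) / (1 - z ^ N)
      = ∑' j : ℕ, z ^ (a - 1) * (z ^ N) ^ j := by
        rw [tsum_mul_left, hgeo, div_eq_mul_inv]
    _ = ∑' j : ℕ, z ^ (((nilEquiv N a hN ha1 ha2) j).1 0 - 1) := by
        refine tsum_congr fun j => ?_
        have hval : ((nilEquiv N a hN ha1 ha2) j).1 0 = a + j * N := rfl
        have hc : j * N = N * j := Nat.mul_comm j N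
        rw [hval, show (a + j * N) - 1 = (a - 1) + N * j by omega, pow_add, pow_mul]
    _ = ∑' s : SIdx N a 1, z ^ (s.1 0 - 1) :=
        (nilEquiv N a hN ha1 ha2).tsum_eq (fun s : SIdx N a 1 => z ^ (s.1 0 - 1))
    _ = ∑' s : SIdx N a 1, (s.1 0 : ℝ) * z ^ (s.1 0 - 1) *
          ∏ i : Fin 1, ((s.1 i : ℝ) ^ ([1] : List ℕ).get i)⁻¹ := by
        refine tsum_congr fun s => ?_
        rw [Fin.prod_univ_one]
        simp only [List.get_cons_zero, pow_one]
        rw [show z ^ (s.1 0 - 1) = z ^ (s.1 0 - 1) * 1 from (mul_one _).symm]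
        exact aux_one z (s.1 0 : ℝ) 1 (cast_pos' s 0) _ |>.trans (by ring)

end LvLemmas

section Groupings

lemma groupings_nil : groupings [] = [[]] := by simp [groupings]

lemma groupings_single (x : ℕ) : groupings [x] = [[x]] := by simp [groupings]

lemma groupings_cons_cons (x y : ℕ) (rest : List ℕ) :
    groupings (x :: y :: rest)
      = ((groupings (y :: rest)).map (x :: ·)) ++ groupings ((x + y) :: rest) := by
  simp [groupings]

lemma mem_groupings_ne_nil : ∀ (l : List ℕ), l ≠ [] → ∀ p ∈ groupings l, p ≠ [] := by
  intro l
  induction l using groupings.induct with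
  | case1 => intro h; exact absurd rfl h
  | case2 x =>
      intro _ p hp
      rw [groupings_single] at hp
      simp at hp
      simp [hp]
  | case3 x y rest ih1 ih2 =>
      intro _ p hp
      rw [groupings_cons_cons] at hp
      rcases List.mem_append.mp hp with h | h
      · obtain ⟨q, hq, rfl⟩ := List.mem_map.mp h
        simp
      · exact ih2 (by simp) p h

lemma mem_groupings_length : ∀ (l : List ℕ), ∀ p ∈ groupings l, p.length ≤ l.length := by
  intro l
  induction l using groupings.induct with
  | case1 =>
      intro p hp
      rw [groupings_nil] at hp
      simp at hp
      simp [hp]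
  | case2 x =>
      intro p hp
      rw [groupings_single] at hp
      simp at hp
      simp [hp]
  | case3 x y rest ih1 ih2 =>
      intro p hp
      rw [groupings_cons_cons] at hp
      rcases List.mem_append.mp hp with h | h
      · obtain ⟨q, hq, rfl⟩ := List.mem_map.mp h
        have := ih1 q hq
        simpa using this
      · have := ih2 p h
        simp only [List.length_cons] at this ⊢
        omega

lemma mem_groupings_pos : ∀ (l : List ℕ), (∀ i ∈ l, 1 ≤ i) →
    ∀ p ∈ groupings l, ∀ x ∈ p, 1 ≤ x := by
  intro l
  induction l using groupings.induct with
  | case1 =>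
      intro _ p hp
      rw [groupings_nil] at hp
      simp at hp
      simp [hp]
  | case2 x =>
      intro hl p hp
      rw [groupings_single] at hp
      simp at hp
      subst hp
      intro v hv
      simp at hv
      subst hv
      exact hl _ (by simp)
  | case3 x y rest ih1 ih2 =>
      intro hl p hp
      rw [groupings_cons_cons] at hp
      rcases List.mem_append.mp hp with h | h
      · obtain ⟨q, hq, rfl⟩ := List.mem_map.mp h
        intro v hv
        rcases List.mem_cons.mp hv with rfl | hv'
        · exact hl v (by simp)
        · exact ih1 (fun i hi => hl i (List.mem_cons_of_mem x hi)) q hq v hv'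
      · refine ih2 ?_ p h
        intro i hi
        rcases List.mem_cons.mp hi with rfl | hi'
        · have := hl x (by simp)
          omega
        · exact hl i (by simp [hi'])

lemma groupings_succ (x : ℕ) (l : List ℕ) :
    groupings ((x + 1) :: l) = (groupings (x :: l)).map (fun q => (q.headI + 1) :: q.tail) := by
  induction l generalizing x with
  | nil => simp [groupings_single]
  | cons y rest ih =>
      rw [groupings_cons_cons, groupings_cons_cons x y rest, List.map_append, List.map_map,
        show x + 1 + y = (x + y) + 1 by omega, ih (x + y)]
      congr 1

end Groupings

section SumHelper

lemma hasDerivAt_list_sum {α : Type*} (l : List α) (f : α → ℝ → ℝ) (f' : α → ℝ) (z : ℝ)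
    (h : ∀ p ∈ l, HasDerivAt (fun t => f p t) (f' p) z) :
    HasDerivAt (fun t => (l.map (fun p => f p t)).sum) ((l.map f').sum) z := by
  induction l with
  | nil => simpa using hasDerivAt_const z (0 : ℝ)
  | cons q l ih =>
      simp only [List.map_cons, List.sum_cons]
      exact (h q List.mem_cons_self).add (ih fun p hp => h p (List.mem_cons_of_mem q hp))

end SumHelper

/-- The derivative of `z ↦ L^r_{N,a}(k₁,…,kₙ;z)` on `0 < z < 1`:
it equals `(1/z)L^r_{N,a}(k₁-1,k₂,…,kₙ;z)` if `k₁ > 1`;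
`(r/z + z^(N-1)/(1-z^N))L^r_{N,a}(k₂,…,kₙ;z)` if `k₁ = 1` and `n ≥ 2`; and
`z^(a-1)/(1-z^N)` if `k₁ = n = 1`. -/
theorem stmt13 (N : ℕ) (hN : 1 ≤ N) (a : ℕ) (ha1 : 1 ≤ a) (ha2 : a ≤ N) (r : ℝ)
    (k₁ : ℕ) (tl : List ℕ) (hk₁ : 1 ≤ k₁) (htl : ∀ i ∈ tl, 1 ≤ i)
    (z : ℝ) (hz0 : 0 < z) (hz1 : z < 1) :
    (2 ≤ k₁ → HasDerivAt (fun t => iLv N a r (k₁ :: tl) t)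
        (1 / z * iLv N a r ((k₁ - 1) :: tl) z) z) ∧
    (k₁ = 1 → tl ≠ [] → HasDerivAt (fun t => iLv N a r (k₁ :: tl) t)
        ((r / z + z ^ (N - 1) / (1 - z ^ N)) * iLv N a r tl z) z) ∧
    (k₁ = 1 → tl = [] → HasDerivAt (fun t => iLv N a r (k₁ :: tl) t)
        (z ^ (a - 1) / (1 - z ^ N)) z) := by
  refine ⟨?_, ?_, ?_⟩
  · -- Case `2 ≤ k₁`
    intro hk2
    have hrep : groupings (k₁ :: tl)
        = (groupings ((k₁ - 1) :: tl)).map (fun q => (q.headI + 1) :: q.tail) := by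
      conv_lhs => rw [show k₁ = (k₁ - 1) + 1 by omega]
      exact groupings_succ (k₁ - 1) tl
    have hpos : ∀ q ∈ groupings ((k₁ - 1) :: tl), ∀ x ∈ q, 1 ≤ x :=
      mem_groupings_pos _ (by
        intro i hi
        rcases List.mem_cons.mp hi with rfl | h
        · omega
        · exact htl i h)
    have hne : ∀ q ∈ groupings ((k₁ - 1) :: tl), q ≠ [] :=
      mem_groupings_ne_nil _ (by simp)
    have hfun : (fun t => iLv N a r (k₁ :: tl) t) = fun t =>
        ((groupings ((k₁ - 1) :: tl)).map (fun q =>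
          r ^ ((tl.length + 1) - q.length) * Lv N a ((q.headI + 1) :: q.tail) t)).sum := by
      funext t
      rw [iLv, hrep, List.map_map]
      refine congrArg List.sum (List.map_congr_left fun q hq => ?_)
      obtain ⟨h0, q', rfl⟩ := List.exists_cons_of_ne_nil (hne q hq)
      simp
    have hsum : 1 / z * iLv N a r ((k₁ - 1) :: tl) z
        = ((groupings ((k₁ - 1) :: tl)).map (fun q =>
            r ^ ((tl.length + 1) - q.length) * (1 / z * Lv N a q z))).sum := by
      rw [iLv, ← List.sum_map_mul_left]
      exact congrArg List.sum (List.map_congr_left fun q hq => by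
        simp only [List.length_cons]; ring)
    rw [hfun, hsum]
    refine hasDerivAt_list_sum _ _ _ z ?_
    intro q hq
    have hq1 : 1 ≤ q.headI := by
      obtain ⟨h0, q', rfl⟩ := List.exists_cons_of_ne_nil (hne q hq)
      simpa using hpos _ hq h0 (by simp)
    have hq2 : q.headI :: q.tail = q := by
      obtain ⟨h0, q', rfl⟩ := List.exists_cons_of_ne_nil (hne q hq)
      simp
    have hbig := Lv_hasDerivAt_big N a (q.headI + 1) (by omega) q.tail z hz0 hz1
    rw [Nat.add_sub_cancel, hq2] at hbig
    exact HasDerivAt.const_mul _ hbig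
  · -- Case `k₁ = 1`, `tl ≠ []`
    rintro rfl htlne
    obtain ⟨c, rest, rfl⟩ := List.exists_cons_of_ne_nil htlne
    have hpos : ∀ q ∈ groupings (c :: rest), ∀ x ∈ q, 1 ≤ x := mem_groupings_pos _ htl
    have hne : ∀ q ∈ groupings (c :: rest), q ≠ [] := mem_groupings_ne_nil _ (by simp)
    have hlen : ∀ q ∈ groupings (c :: rest), q.length ≤ rest.length + 1 := by
      intro q hq
      have := mem_groupings_length _ q hq
      simpa using this
    have hsplit : groupings (1 :: c :: rest)
        = ((groupings (c :: rest)).map (1 :: ·))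
          ++ (groupings (c :: rest)).map (fun q => (q.headI + 1) :: q.tail) := by
      rw [groupings_cons_cons]
      congr 1
      rw [show 1 + c = c + 1 by omega]
      exact groupings_succ c rest
    have hfun : (fun t => iLv N a r (1 :: c :: rest) t) = fun t =>
        ((groupings (c :: rest)).map (fun q =>
          r ^ ((c :: rest).length - q.length) * Lv N a (1 :: q) t)).sum
        + ((groupings (c :: rest)).map (fun q =>
          r ^ ((1 :: c :: rest).length - q.length) * Lv N a ((q.headI + 1) :: q.tail) t)).sum := by
      funext t
      rw [iLv, hsplit, List.map_append, List.sum_append, List.map_map, List.map_map]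
      congr 1
      · refine congrArg List.sum (List.map_congr_left fun q hq => ?_)
        simp [Nat.succ_sub_succ]
      · refine congrArg List.sum (List.map_congr_left fun q hq => ?_)
        obtain ⟨h0, q', rfl⟩ := List.exists_cons_of_ne_nil (hne q hq)
        simp
    have hd1 := hasDerivAt_list_sum (groupings (c :: rest))
        (fun q t => r ^ ((c :: rest).length - q.length) * Lv N a (1 :: q) t)
        (fun q => r ^ ((c :: rest).length - q.length) *
          (z ^ (N - 1) / (1 - z ^ N) * Lv N a q z)) z (fun q hq => by
          obtain ⟨h0, q', rfl⟩ := List.exists_cons_of_ne_nil (hne q hq)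
          exact HasDerivAt.const_mul _ (Lv_hasDerivAt_one_cons N a hN h0 q' z hz0 hz1))
    have hd2 := hasDerivAt_list_sum (groupings (c :: rest))
        (fun q t => r ^ ((1 :: c :: rest).length - q.length) * Lv N a ((q.headI + 1) :: q.tail) t)
        (fun q => r ^ ((1 :: c :: rest).length - q.length) * (1 / z * Lv N a q z)) z
        (fun q hq => by
          have hq1 : 1 ≤ q.headI := by
            obtain ⟨h0, q', rfl⟩ := List.exists_cons_of_ne_nil (hne q hq)
            simpa using hpos _ hq h0 (by simp)
          have hq2 : q.headI :: q.tail = q := by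
            obtain ⟨h0, q', rfl⟩ := List.exists_cons_of_ne_nil (hne q hq)
            simp
          have hbig := Lv_hasDerivAt_big N a (q.headI + 1) (by omega) q.tail z hz0 hz1
          rw [Nat.add_sub_cancel, hq2] at hbig
          exact HasDerivAt.const_mul _ hbig)
    have hsum : (r / z + z ^ (N - 1) / (1 - z ^ N)) * iLv N a r (c :: rest) z
        = ((groupings (c :: rest)).map (fun q =>
            r ^ ((c :: rest).length - q.length) *
              (z ^ (N - 1) / (1 - z ^ N) * Lv N a q z))).sum
          + ((groupings (c :: rest)).map (fun q =>
            r ^ ((1 :: c :: rest).length - q.length) * (1 / z * Lv N a q z))).sum := by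
      rw [show (r / z + z ^ (N - 1) / (1 - z ^ N)) * iLv N a r (c :: rest) z
        = z ^ (N - 1) / (1 - z ^ N) * iLv N a r (c :: rest) z
          + r / z * iLv N a r (c :: rest) z by ring]
      congr 1
      · rw [iLv, ← List.sum_map_mul_left]
        exact congrArg List.sum (List.map_congr_left fun q hq => by ring)
      · rw [iLv, ← List.sum_map_mul_left]
        refine congrArg List.sum (List.map_congr_left fun q hq => ?_)
        have hle := hlen q hq
        rw [show (1 :: c :: rest).length - q.length
          = ((c :: rest).length - q.length) + 1 by
            simp only [List.length_cons] at *
            omega, pow_succ]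
        ring
    rw [hfun, hsum]
    exact hd1.add hd2
  · -- Case `k₁ = 1`, `tl = []`
    rintro rfl rfl
    have hfun : (fun t => iLv N a r [1] t) = fun t => Lv N a [1] t := by
      funext t
      rw [iLv, groupings_single]
      simp
    rw [hfun]
    exact Lv_hasDerivAt_one_nil N a hN ha1 ha2 z hz0 hz1
end
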